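/- arXiv:1909.11219 — 8 statements merged into one kernel-verified Lean document; each statement's English description precedes it below -/
import Mathlib

section
/- Milgrom–Segal envelope theorem (refined form): Under the basic assumptions, every optimal decision rule X : [0,1] → 𝒳 satisfies the envelope formula. -/
open MeasureTheory Set Filter intervalIntegral
open scoped ENNReal NNReal Topology

/-- A family `{φ x}` of functions `[0,1] → ℝ` is *absolutely equi-continuous* iff the family
of divided-difference suprema `t ↦ sup_x |(φ x (t+m) − φ x t)/m|` (for `m > 0`, each defined on
`{t ∈ [0,1] : t + m ∈ [0,1]}`) is uniformly integrable. -/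
def AbsolutelyEquicontinuous {𝒳 : Type*} (φ : 𝒳 → ℝ → ℝ) : Prop :=
  ∀ ε > (0 : ℝ), ∃ δ > (0 : ℝ), ∀ T : Set ℝ, IsOpen T → T ⊆ Icc 0 1 →
    volume T < ENNReal.ofReal δ → ∀ m : ℝ, 0 < m →
      ∫⁻ t in T ∩ {t : ℝ | t ∈ Icc (0:ℝ) 1 ∧ t + m ∈ Icc (0:ℝ) 1},
        ⨆ x, ENNReal.ofReal |(φ x (t + m) - φ x t) / m| < ENNReal.ofReal ε

set_option linter.unusedSectionVars false

section MSAux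

variable {𝒳 : Type*}

/-- clamp to `[0,1]` -/
noncomputable def msClamp (s : ℝ) : ℝ := max 0 (min 1 s)

lemma msClamp_mem (s : ℝ) : msClamp s ∈ Icc (0:ℝ) 1 := by
  constructor
  · exact le_max_left _ _
  · unfold msClamp
    rcases le_total (0:ℝ) (min 1 s) with h | h
    · rw [max_eq_right h]; exact min_le_left _ _
    · rw [max_eq_left h]; norm_num

lemma msClamp_eq {s : ℝ} (h : s ∈ Icc (0:ℝ) 1) : msClamp s = s := by
  unfold msClamp
  rw [min_eq_right h.2, max_eq_right h.1]

lemma msClamp_dist (a b : ℝ) : |msClamp a - msClamp b| ≤ |a - b| := by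
  unfold msClamp
  calc |max 0 (min 1 a) - max 0 (min 1 b)| ≤ |min 1 a - min 1 b| := by
        rw [max_comm 0 (min 1 a), max_comm 0 (min 1 b)]
        exact abs_max_sub_max_le_abs _ _ _
    _ ≤ |a - b| := by
        have := abs_min_sub_min_le_max (1:ℝ) a 1 b
        simpa using this

lemma continuous_msClamp : Continuous msClamp := by
  unfold msClamp; fun_prop

/-- the sup of difference quotients -/
noncomputable def msG (f : 𝒳 → ℝ → ℝ) (m t : ℝ) : ℝ≥0∞ :=
  ⨆ x, ENNReal.ofReal |(f x (t + m) - f x t) / m|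

/-- domain of forward difference quotient -/
def msS (m : ℝ) : Set ℝ := {t : ℝ | t ∈ Icc (0:ℝ) 1 ∧ t + m ∈ Icc (0:ℝ) 1}

lemma msS_measurable (m : ℝ) : MeasurableSet (msS m) := by
  have : msS m = Icc 0 1 ∩ (fun t => t + m) ⁻¹' (Icc 0 1) := rfl
  rw [this]
  exact measurableSet_Icc.inter ((measurable_add_const m) measurableSet_Icc)

/-- clamped value function -/
noncomputable def msV (f : 𝒳 → ℝ → ℝ) (X : ℝ → 𝒳) (s : ℝ) : ℝ :=
  f (X (msClamp s)) (msClamp s)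

variable [Nonempty 𝒳] {f f₂ : 𝒳 → ℝ → ℝ} {X : ℝ → 𝒳}

/-- subadditivity of set lintegral over finite unions -/
lemma ms_lint_iUnion_le (g : ℝ → ℝ≥0∞) (s : ℕ → Set ℝ) (M : ℕ) :
    ∫⁻ t in (⋃ j ∈ Finset.range M, s j), g t ≤ ∑ j ∈ Finset.range M, ∫⁻ t in s j, g t := by
  induction M with
  | zero => simp
  | succ M ih =>
      rw [Finset.sum_range_succ]
      have hset : (⋃ j ∈ Finset.range (M+1), s j) = (⋃ j ∈ Finset.range M, s j) ∪ s M := by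
        rw [Finset.range_add_one]
        simp [Set.biUnion_insert, Set.union_comm]
      rw [hset]
      calc ∫⁻ t in (⋃ j ∈ Finset.range M, s j) ∪ s M, g t
          ≤ ∫⁻ t, g t ∂((volume : Measure ℝ).restrict (⋃ j ∈ Finset.range M, s j)
              + (volume : Measure ℝ).restrict (s M)) :=
            lintegral_mono' (Measure.restrict_union_le _ _) le_rfl
        _ = (∫⁻ t in (⋃ j ∈ Finset.range M, s j), g t) + ∫⁻ t in s M, g t :=
            lintegral_add_measure _ _ _
        _ ≤ _ := add_le_add ih le_rfl

/-- superadditivity of set lintegral over disjoint interval pieces -/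
lemma ms_lint_sum_Ioo (g : ℝ → ℝ≥0∞) (u : ℕ → ℝ) (hu : Monotone u) (W : Set ℝ)
    (hW : MeasurableSet W) (N : ℕ) :
    ∑ i ∈ Finset.range N, ∫⁻ t in Ioo (u i) (u (i+1)) ∩ W, g t
      ≤ ∫⁻ t in Ioo (u 0) (u N) ∩ W, g t := by
  induction N with
  | zero => simp
  | succ N ih =>
      rw [Finset.sum_range_succ]
      have hdisj : Disjoint (Ioo (u 0) (u N) ∩ W) (Ioo (u N) (u (N+1)) ∩ W) := by
        apply Set.disjoint_left.2
        rintro t ⟨⟨_, h2⟩, _⟩ ⟨⟨h3, _⟩, _⟩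
        exact absurd (h2.trans h3) (lt_irrefl t)
      have hmeas : MeasurableSet (Ioo (u N) (u (N+1)) ∩ W) := measurableSet_Ioo.inter hW
      have hsub : (Ioo (u 0) (u N) ∩ W) ∪ (Ioo (u N) (u (N+1)) ∩ W)
          ⊆ Ioo (u 0) (u (N+1)) ∩ W := by
        rintro t (⟨⟨h1, h2⟩, hw⟩ | ⟨⟨h1, h2⟩, hw⟩)
        · exact ⟨⟨h1, h2.trans_le (hu (Nat.le_succ N))⟩, hw⟩
        · exact ⟨⟨lt_of_le_of_lt (hu (Nat.zero_le N)) h1, h2⟩, hw⟩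
      calc ∑ i ∈ Finset.range N, (∫⁻ t in Ioo (u i) (u (i+1)) ∩ W, g t)
            + ∫⁻ t in Ioo (u N) (u (N+1)) ∩ W, g t
          ≤ (∫⁻ t in Ioo (u 0) (u N) ∩ W, g t) + ∫⁻ t in Ioo (u N) (u (N+1)) ∩ W, g t :=
            add_le_add ih le_rfl
        _ = ∫⁻ t in (Ioo (u 0) (u N) ∩ W) ∪ (Ioo (u N) (u (N+1)) ∩ W), g t := by
            rw [Measure.restrict_union hdisj hmeas, lintegral_add_measure]
        _ ≤ _ := lintegral_mono_set hsub


lemma msF_cont (hdiff : ∀ x : 𝒳, ∀ t ∈ Icc (0:ℝ) 1, HasDerivWithinAt (f x) (f₂ x t) (Icc (0:ℝ) 1) t)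
    (x : 𝒳) : Continuous (fun s => f x (msClamp s)) := by
  have hc : ContinuousOn (f x) (Icc (0:ℝ) 1) := fun t ht => (hdiff x t ht).continuousWithinAt
  exact hc.comp_continuous continuous_msClamp msClamp_mem

lemma msV_eq {t : ℝ} (ht : t ∈ Icc (0:ℝ) 1) : msV f X t = f (X t) t := by
  unfold msV; rw [msClamp_eq ht]

lemma msV_sandwich (hopt : ∀ t ∈ Icc (0:ℝ) 1, ∀ x : 𝒳, f x t ≤ f (X t) t)
    {a b : ℝ} (ha : a ∈ Icc (0:ℝ) 1) (hb : b ∈ Icc (0:ℝ) 1) :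
    f (X a) b - f (X a) a ≤ msV f X b - msV f X a ∧
      msV f X b - msV f X a ≤ f (X b) b - f (X b) a := by
  rw [msV_eq ha, msV_eq hb]
  have h1 := hopt b hb (X a)
  have h2 := hopt a ha (X b)
  constructor <;> linarith

lemma msG_le {x : 𝒳} {s m : ℝ} :
    ENNReal.ofReal |(f x (s + m) - f x s) / m| ≤ msG f m s :=
  le_iSup (fun x => ENNReal.ofReal |(f x (s + m) - f x s) / m|) x

lemma msV_quot_le (hopt : ∀ t ∈ Icc (0:ℝ) 1, ∀ x : 𝒳, f x t ≤ f (X t) t)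
    {s m : ℝ} (hm : 0 < m) (hs : s ∈ msS m) :
    ENNReal.ofReal |(msV f X (s + m) - msV f X s) / m| ≤ msG f m s := by
  obtain ⟨hs1, hs2⟩ := hs
  obtain ⟨h1, h2⟩ := msV_sandwich (f := f) (X := X) hopt hs1 hs2
  have habs : |msV f X (s + m) - msV f X s|
      ≤ max |f (X s) (s + m) - f (X s) s| |f (X (s + m)) (s + m) - f (X (s + m)) s| :=
    abs_le_max_abs_abs h1 h2
  rcases le_total |f (X s) (s + m) - f (X s) s| |f (X (s+m)) (s + m) - f (X (s+m)) s| with h | h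
  · rw [max_eq_right h] at habs
    refine le_trans ?_ (msG_le (x := X (s+m)))
    apply ENNReal.ofReal_le_ofReal
    rw [abs_div, abs_div]
    exact div_le_div_of_nonneg_right habs (abs_nonneg m)
  · rw [max_eq_left h] at habs
    refine le_trans ?_ (msG_le (x := X s))
    apply ENNReal.ofReal_le_ofReal
    rw [abs_div, abs_div]
    exact div_le_div_of_nonneg_right habs (abs_nonneg m)

lemma msA_bound (hdiff : ∀ x : 𝒳, ∀ t ∈ Icc (0:ℝ) 1, HasDerivWithinAt (f x) (f₂ x t) (Icc (0:ℝ) 1) t)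
    {x : 𝒳} {a b m : ℝ} (h0 : 0 ≤ a) (hab : a ≤ b) (hm : 0 < m) (hb1 : b + m ≤ 1) :
    ENNReal.ofReal |∫ u in a..b, (f x (u + m) - f x u) / m|
      ≤ ∫⁻ t in Ioo a b ∩ msS m, msG f m t := by
  have hb : b ≤ 1 := by linarith
  set fc := fun u => f x (msClamp u) with hfc
  have hfcC : Continuous fc := msF_cont hdiff x
  set qc := fun u => (fc (u + m) - fc u) / m with hqc
  have hqcC : Continuous qc := by
    apply Continuous.div_const
    exact ((hfcC.comp (continuous_id.add continuous_const)).sub hfcC)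
  have hmem : ∀ u ∈ Icc a b, u ∈ Icc (0:ℝ) 1 ∧ u + m ∈ Icc (0:ℝ) 1 := by
    intro u hu
    exact ⟨⟨h0.trans hu.1, hu.2.trans hb⟩, ⟨by linarith [hu.1], by linarith [hu.2]⟩⟩
  have heq : ∀ u ∈ Icc a b, qc u = (f x (u + m) - f x u) / m := by
    intro u hu
    obtain ⟨hu1, hu2⟩ := hmem u hu
    simp only [hqc, hfc, msClamp_eq hu1, msClamp_eq hu2]
  have hcongr : (∫ u in a..b, (f x (u + m) - f x u) / m) = ∫ u in a..b, qc u := by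
    apply intervalIntegral.integral_congr
    intro u hu
    rw [uIcc_of_le hab] at hu
    exact (heq u hu).symm
  rw [hcongr]
  have habs : |∫ u in a..b, qc u| ≤ ∫ u in a..b, |qc u| :=
    intervalIntegral.abs_integral_le_integral_abs hab
  have hint : IntegrableOn (fun u => |qc u|) (Ioc a b) volume :=
    (hqcC.abs).integrableOn_Ioc
  have hofReal : ENNReal.ofReal (∫ u in a..b, |qc u|)
      = ∫⁻ u in Ioc a b, ENNReal.ofReal |qc u| := by
    rw [intervalIntegral.integral_of_le hab]
    exact ofReal_integral_eq_lintegral_ofReal hint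
      (ae_of_all _ fun u => abs_nonneg _)
  calc ENNReal.ofReal |∫ u in a..b, qc u| ≤ ENNReal.ofReal (∫ u in a..b, |qc u|) :=
        ENNReal.ofReal_le_ofReal habs
    _ = ∫⁻ u in Ioc a b, ENNReal.ofReal |qc u| := hofReal
    _ = ∫⁻ u in Ioo a b, ENNReal.ofReal |qc u| := by
        rw [Measure.restrict_congr_set Ioo_ae_eq_Ioc.symm]
    _ ≤ ∫⁻ u in Ioo a b, msG f m u := by
        apply lintegral_mono_ae
        rw [ae_restrict_iff' measurableSet_Ioo]
        apply ae_of_all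
        intro u hu
        rw [heq u (Ioo_subset_Icc_self hu)]
        exact msG_le
    _ ≤ ∫⁻ t in Ioo a b ∩ msS m, msG f m t := by
        apply lintegral_mono_set
        intro u hu
        refine ⟨hu, ?_⟩
        obtain ⟨hu1, hu2⟩ := hmem u (Ioo_subset_Icc_self hu)
        exact ⟨hu1, hu2⟩

lemma msA_tendsto (hdiff : ∀ x : 𝒳, ∀ t ∈ Icc (0:ℝ) 1, HasDerivWithinAt (f x) (f₂ x t) (Icc (0:ℝ) 1) t)
    {x : 𝒳} {a b : ℝ} (h0 : 0 ≤ a) (hab : a ≤ b) (hb : b < 1)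
    {m : ℕ → ℝ} (hmpos : ∀ n, 0 < m n) (hm0 : Tendsto m atTop (𝓝 0)) :
    Tendsto (fun n => ∫ u in a..b, (f x (u + m n) - f x u) / (m n)) atTop
      (𝓝 (f x b - f x a)) := by
  set fc := fun u => f x (msClamp u) with hfc
  have hfcC : Continuous fc := msF_cont hdiff x
  set P := fun u => ∫ v in (0:ℝ)..u, fc v with hP
  have hPd : ∀ r : ℝ, HasDerivAt P (fc r) r := by
    intro r
    exact intervalIntegral.integral_hasDerivAt_right (hfcC.intervalIntegrable 0 r)
      (hfcC.stronglyMeasurableAtFilter volume (𝓝 r)) hfcC.continuousAt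
  have hslope : ∀ r : ℝ, Tendsto (fun n => (P (r + m n) - P r) / (m n)) atTop (𝓝 (fc r)) := by
    intro r
    have h1 : Tendsto (slope P r) (𝓝[≠] r) (𝓝 (fc r)) :=
      hasDerivAt_iff_tendsto_slope.1 (hPd r)
    have h2 : Tendsto (fun n => r + m n) atTop (𝓝[≠] r) := by
      apply tendsto_nhdsWithin_of_tendsto_nhds_of_eventually_within
      · have := (tendsto_const_nhds (x := r) (f := atTop (α := ℕ))).add hm0
        simpa using this
      · exact Eventually.of_forall fun n => by
          simp only [mem_compl_iff, mem_singleton_iff]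
          intro h
          nlinarith [hmpos n, congrArg (fun z => z - r) h]
    have := h1.comp h2
    apply this.congr
    intro n
    simp [slope_def_field]
  have key : ∀ᶠ n in atTop, (∫ u in a..b, (f x (u + m n) - f x u) / (m n))
      = ((P (b + m n) - P b) - (P (a + m n) - P a)) / (m n) := by
    have hev : ∀ᶠ n in atTop, m n ≤ 1 - b := by
      have hpos : (0:ℝ) < 1 - b := by linarith
      exact hm0.eventually (eventually_le_nhds (by linarith) )
    filter_upwards [hev] with n hn
    have hbm : b + m n ≤ 1 := by linarith
    have heq : ∀ u ∈ Icc a b, (f x (u + m n) - f x u) / (m n) = (fc (u + m n) - fc u) / (m n) := by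
      intro u hu
      have hu1 : u ∈ Icc (0:ℝ) 1 := ⟨h0.trans hu.1, hu.2.trans (by linarith)⟩
      have hu2 : u + m n ∈ Icc (0:ℝ) 1 := ⟨by nlinarith [hu.1, hmpos n], by linarith [hu.2]⟩
      simp only [hfc, msClamp_eq hu1, msClamp_eq hu2]
    have hcongr : (∫ u in a..b, (f x (u + m n) - f x u) / (m n))
        = ∫ u in a..b, (fc (u + m n) - fc u) / (m n) := by
      apply intervalIntegral.integral_congr
      intro u hu
      rw [uIcc_of_le hab] at hu
      exact heq u hu
    rw [hcongr]
    have hi1 : IntervalIntegrable (fun u => fc (u + m n)) volume a b :=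
      (hfcC.comp (continuous_id.add continuous_const)).intervalIntegrable a b
    have hi2 : IntervalIntegrable fc volume a b := hfcC.intervalIntegrable a b
    rw [intervalIntegral.integral_div]
    congr 1
    rw [intervalIntegral.integral_sub hi1 hi2]
    have h3 : (∫ u in a..b, fc (u + m n)) = ∫ u in (a + m n)..(b + m n), fc u :=
      intervalIntegral.integral_comp_add_right fc (m n)
    have h4 : ∀ c d : ℝ, (∫ u in c..d, fc u) = P d - P c := by
      intro c d
      rw [hP]
      rw [← intervalIntegral.integral_interval_sub_left (hfcC.intervalIntegrable 0 d)
        (hfcC.intervalIntegrable 0 c)]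
    rw [h3, h4, h4]
    ring
  apply Tendsto.congr' (key.mono fun n h => h.symm)
  have := ((hslope b).sub (hslope a))
  have hr : Tendsto (fun n => ((P (b + m n) - P b) - (P (a + m n) - P a)) / (m n)) atTop
      (𝓝 (fc b - fc a)) := by
    apply this.congr
    intro n
    rw [div_sub_div_same]
  have hfcb : fc b = f x b := by rw [hfc]; simp [msClamp_eq ⟨h0.trans hab, hb.le⟩]
  have hfca : fc a = f x a := by rw [hfc]; simp [msClamp_eq ⟨h0, hab.trans hb.le⟩]
  rw [hfcb, hfca] at hr
  exact hr



lemma ms_unifCont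
    (hdiff : ∀ x : 𝒳, ∀ t ∈ Icc (0:ℝ) 1, HasDerivWithinAt (f x) (f₂ x t) (Icc (0:ℝ) 1) t)
    (hequi : AbsolutelyEquicontinuous f) :
    ∀ ε > (0:ℝ), ∃ δ > (0:ℝ), ∀ (x : 𝒳), ∀ a ∈ Icc (0:ℝ) 1, ∀ b ∈ Icc (0:ℝ) 1,
      |b - a| < δ → |f x b - f x a| ≤ ε := by
  intro ε hε
  obtain ⟨δ, hδ, hT⟩ := hequi ε hε
  refine ⟨δ, hδ, ?_⟩
  have main : ∀ (x : 𝒳), ∀ a b : ℝ, 0 ≤ a → a ≤ b → b < 1 → b - a < δ →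
      |f x b - f x a| ≤ ε := by
    intro x a b h0 hab hb hd
    set m : ℕ → ℝ := fun n => (1 - b) / (n + 1) with hm
    have hmpos : ∀ n, 0 < m n := by
      intro n
      apply div_pos (by linarith)
      positivity
    have hm0 : Tendsto m atTop (𝓝 0) := by
      have h1 := tendsto_one_div_add_atTop_nhds_zero_nat.const_mul (1 - b)
      rw [mul_zero] at h1
      apply h1.congr
      intro n
      rw [hm, mul_one_div]
    have htd := msA_tendsto (x := x) hdiff h0 hab hb hmpos hm0
    have hbound : ∀ n, |∫ u in a..b, (f x (u + m n) - f x u) / (m n)| ≤ ε := by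
      intro n
      have hb1 : b + m n ≤ 1 := by
        have : m n ≤ 1 - b := by
          rw [hm]
          rw [div_le_iff₀ (by positivity)]
          nlinarith [Nat.cast_nonneg (α := ℝ) n]
        linarith
      have h1 := msA_bound (f₂ := f₂) (x := x) hdiff h0 hab (hmpos n) hb1
      have h2 : (∫⁻ t in Ioo a b ∩ msS (m n), msG f (m n) t) < ENNReal.ofReal ε := by
        apply hT (Ioo a b) isOpen_Ioo
        · exact fun t ht => ⟨h0.trans ht.1.le, ht.2.le.trans (by linarith)⟩
        · rw [Real.volume_Ioo]
          exact ENNReal.ofReal_lt_ofReal_iff hδ |>.2 hd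
        · exact hmpos n
      have := h1.trans h2.le
      rwa [ENNReal.ofReal_le_ofReal_iff hε.le] at this
    have habs : Tendsto (fun n => |∫ u in a..b, (f x (u + m n) - f x u) / (m n)|) atTop
        (𝓝 |f x b - f x a|) := htd.abs
    exact le_of_tendsto habs (Eventually.of_forall hbound)
  have main1 : ∀ (x : 𝒳), ∀ c : ℝ, 0 ≤ c → c < 1 → 1 - c < δ → |f x 1 - f x c| ≤ ε := by
    intro x c hc0 hc1 hcd
    have hcont : ContinuousWithinAt (fun t => |f x t - f x c|) (Icc (0:ℝ) 1) 1 := by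
      apply ContinuousWithinAt.abs
      exact ((hdiff x 1 (by norm_num)).continuousWithinAt.sub continuousWithinAt_const)
    have hne : (𝓝[Ioo c 1] (1:ℝ)).NeBot := right_nhdsWithin_Ioo_neBot hc1
    have htd : Tendsto (fun t => |f x t - f x c|) (𝓝[Ioo c 1] (1:ℝ)) (𝓝 |f x 1 - f x c|) := by
      apply hcont.tendsto.mono_left
      apply nhdsWithin_mono
      intro t ht
      exact ⟨hc0.trans ht.1.le, ht.2.le⟩
    apply le_of_tendsto htd
    filter_upwards [eventually_mem_nhdsWithin] with t ht
    exact main x c t hc0 ht.1.le ht.2 (by linarith [ht.1, ht.2])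
  intro x a ha b hb hd
  rcases le_total a b with hab | hab
  swap
  · rw [abs_sub_comm] at hd ⊢
    rw [abs_of_nonneg (by linarith)] at hd
    rcases lt_or_eq_of_le hab with h | h
    · rcases lt_or_eq_of_le ha.2 with ha1 | ha1
      · exact main x b a hb.1 hab ha1 (by linarith)
      · rw [ha1]
        rcases lt_or_eq_of_le hb.2 with hb1 | hb1
        · exact main1 x b hb.1 hb1 (by rw [ha1] at hd; linarith)
        · rw [hb1]; simp [hε.le]
    · rw [h]; simp [hε.le]
  · rw [abs_of_nonneg (by linarith)] at hd
    rcases lt_or_eq_of_le hb.2 with hb1 | hb1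
    · exact main x a b ha.1 hab hb1 (by linarith)
    · rw [hb1]
      rcases lt_or_eq_of_le ha.2 with ha1 | ha1
      · exact main1 x a ha.1 ha1 (by rw [hb1] at hd; linarith)
      · rw [ha1]; simp [hε.le]


lemma msV_unif
    (hdiff : ∀ x : 𝒳, ∀ t ∈ Icc (0:ℝ) 1, HasDerivWithinAt (f x) (f₂ x t) (Icc (0:ℝ) 1) t)
    (hequi : AbsolutelyEquicontinuous f)
    (hopt : ∀ t ∈ Icc (0:ℝ) 1, ∀ x : 𝒳, f x t ≤ f (X t) t) :
    ∀ ε > (0:ℝ), ∃ δ > (0:ℝ), ∀ u v : ℝ, |u - v| < δ →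
      |msV f X u - msV f X v| ≤ ε := by
  intro ε hε
  obtain ⟨δ, hδ, hmod⟩ := ms_unifCont (f₂ := f₂) hdiff hequi ε hε
  refine ⟨δ, hδ, ?_⟩
  intro u v huv
  set a := msClamp v with hav
  set b := msClamp u with hbu
  have ha : a ∈ Icc (0:ℝ) 1 := msClamp_mem v
  have hb : b ∈ Icc (0:ℝ) 1 := msClamp_mem u
  have hd : |b - a| < δ := lt_of_le_of_lt (msClamp_dist u v) huv
  have hVu : msV f X u = msV f X b := by
    unfold msV
    rw [msClamp_eq hb]
  have hVv : msV f X v = msV f X a := by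
    unfold msV
    rw [msClamp_eq ha]
  obtain ⟨h1, h2⟩ := msV_sandwich (f := f) (X := X) hopt ha hb
  have e1 := hmod (X b) a ha b hb hd
  have e2 := hmod (X a) a ha b hb hd
  rw [hVu, hVv]
  rw [abs_le] at e1 e2 ⊢
  constructor <;> [nlinarith [abs_nonneg (f (X a) b - f (X a) a)]; nlinarith]

lemma msV_continuous
    (hdiff : ∀ x : 𝒳, ∀ t ∈ Icc (0:ℝ) 1, HasDerivWithinAt (f x) (f₂ x t) (Icc (0:ℝ) 1) t)
    (hequi : AbsolutelyEquicontinuous f)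
    (hopt : ∀ t ∈ Icc (0:ℝ) 1, ∀ x : 𝒳, f x t ≤ f (X t) t) :
    Continuous (msV f X) := by
  rw [Metric.continuous_iff]
  intro u ε hε
  obtain ⟨δ, hδ, hmod⟩ := msV_unif (f₂ := f₂) hdiff hequi hopt (ε/2) (by linarith)
  refine ⟨δ, hδ, ?_⟩
  intro v hv
  have := hmod v u (by rwa [Real.dist_eq] at hv)
  rw [Real.dist_eq]
  linarith


lemma msG_global (hequi : AbsolutelyEquicontinuous f) :
    ∃ C : ℝ, 0 ≤ C ∧ ∀ m : ℝ, 0 < m →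
      ∫⁻ t in Ioo (0:ℝ) 1 ∩ msS m, msG f m t ≤ ENNReal.ofReal C := by
  obtain ⟨δ, hδ, hT⟩ := hequi 1 one_pos
  obtain ⟨K, hK⟩ := exists_nat_gt (1/δ)
  have hKpos : (0:ℝ) < K := lt_of_lt_of_le (by positivity) hK.le
  set κ : ℝ := 2 * K with hκdef
  have hκ : (0:ℝ) < κ := by positivity
  have hlen : 1 / (K:ℝ) < δ := by
    rw [div_lt_iff₀ hKpos]
    rw [div_lt_iff₀ hδ] at hK
    linarith [hK]
  set sj : ℕ → Set ℝ := fun j => Ioo (0:ℝ) 1 ∩ Ioo ((j:ℝ)/κ - 1/κ) ((j:ℝ)/κ + 1/κ) with hsj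
  refine ⟨(2*K : ℕ), by positivity, ?_⟩
  intro m hm
  have hcover : Ioo (0:ℝ) 1 ∩ msS m ⊆ ⋃ j ∈ Finset.range (2*K), (sj j ∩ msS m) := by
    rintro t ⟨ht, hts⟩
    have ht0 : (0:ℝ) ≤ t * κ := by nlinarith [ht.1]
    set j := ⌊t * κ⌋₊ with hj
    have hj1 : (j:ℝ) ≤ t * κ := Nat.floor_le ht0
    have hj2 : t * κ < j + 1 := Nat.lt_floor_add_one _
    have hjlt : j < 2*K := by
      have : t * κ < κ := by nlinarith [ht.2]
      have : (j:ℝ) < (2*K:ℕ) := by push_cast; nlinarith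
      exact_mod_cast this
    apply Set.mem_biUnion (Finset.mem_range.2 hjlt)
    refine ⟨⟨ht, ?_, ?_⟩, hts⟩
    · rw [← sub_div, div_lt_iff₀ hκ]
      nlinarith
    · rw [← add_div, lt_div_iff₀ hκ]
      nlinarith
  calc ∫⁻ t in Ioo (0:ℝ) 1 ∩ msS m, msG f m t
      ≤ ∫⁻ t in ⋃ j ∈ Finset.range (2*K), (sj j ∩ msS m), msG f m t :=
        lintegral_mono_set hcover
    _ ≤ ∑ j ∈ Finset.range (2*K), ∫⁻ t in sj j ∩ msS m, msG f m t :=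
        ms_lint_iUnion_le _ _ _
    _ ≤ ∑ _j ∈ Finset.range (2*K), ENNReal.ofReal 1 := by
        apply Finset.sum_le_sum
        intro j _
        apply le_of_lt
        apply hT (sj j)
        · exact (isOpen_Ioo.inter isOpen_Ioo)
        · exact fun t ht => ⟨ht.1.1.le, ht.1.2.le⟩
        · calc volume (sj j) ≤ volume (Ioo ((j:ℝ)/κ - 1/κ) ((j:ℝ)/κ + 1/κ)) :=
              measure_mono Set.inter_subset_right
            _ = ENNReal.ofReal (2/κ) := by rw [Real.volume_Ioo]; ring_nf
            _ < ENNReal.ofReal δ := by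
                apply ENNReal.ofReal_lt_ofReal_iff hδ |>.2
                rw [hκdef]
                rw [div_lt_iff₀ (by positivity)]
                rw [div_lt_iff₀ hKpos] at hlen
                nlinarith
        · exact hm
    _ = ENNReal.ofReal ((2*K : ℕ)) := by
        rw [Finset.sum_const, Finset.card_range, ENNReal.ofReal_one, nsmul_eq_mul, mul_one,
          ← ENNReal.ofReal_natCast (2*K)]


lemma msV_bv
    (hdiff : ∀ x : 𝒳, ∀ t ∈ Icc (0:ℝ) 1, HasDerivWithinAt (f x) (f₂ x t) (Icc (0:ℝ) 1) t)
    (hequi : AbsolutelyEquicontinuous f)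
    (hopt : ∀ t ∈ Icc (0:ℝ) 1, ∀ x : 𝒳, f x t ≤ f (X t) t) :
    LocallyBoundedVariationOn (msV f X) (Ioo (0:ℝ) 1) := by
  obtain ⟨C, hC0, hCbd⟩ := msG_global hequi
  have hbv : eVariationOn (msV f X) (Ioo (0:ℝ) 1) ≤ ENNReal.ofReal C := by
    apply iSup_le
    rintro ⟨N, u, hu, hus⟩
    simp only
    have hedist : ∀ i : ℕ, edist (msV f X (u (i+1))) (msV f X (u i))
        = ENNReal.ofReal |msV f X (u (i+1)) - msV f X (u i)| := by
      intro i
      rw [edist_dist, Real.dist_eq]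
    rcases Nat.eq_zero_or_pos N with hN | hN
    · subst hN; simp
    -- choose comparison points
    have hx : ∀ i : ℕ, ∃ x : 𝒳, |msV f X (u (i+1)) - msV f X (u i)|
        ≤ |f x (u (i+1)) - f x (u i)| := by
      intro i
      have h1 : u i ∈ Icc (0:ℝ) 1 := Ioo_subset_Icc_self (hus i)
      have h2 : u (i+1) ∈ Icc (0:ℝ) 1 := Ioo_subset_Icc_self (hus (i+1))
      obtain ⟨hl, hr⟩ := msV_sandwich (f := f) (X := X) hopt h1 h2
      have := abs_le_max_abs_abs hl hr
      rcases le_total |f (X (u i)) (u (i+1)) - f (X (u i)) (u i)|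
          |f (X (u (i+1))) (u (i+1)) - f (X (u (i+1))) (u i)| with h | h
      · exact ⟨X (u (i+1)), by rw [max_eq_right h] at this; exact this⟩
      · exact ⟨X (u i), by rw [max_eq_left h] at this; exact this⟩
    choose xs hxs using hx
    set m : ℕ → ℝ := fun n => (1 - u N) / (n + 1) with hm
    have huN : u N < 1 := (hus N).2
    have hmpos : ∀ n, 0 < m n := by
      intro n
      apply div_pos (by linarith)
      positivity
    have hm0 : Tendsto m atTop (𝓝 0) := by
      have h1 := tendsto_one_div_add_atTop_nhds_zero_nat.const_mul (1 - u N)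
      rw [mul_zero] at h1
      apply h1.congr
      intro n
      rw [hm, mul_one_div]
    have htds : ∀ i ∈ Finset.range N, Tendsto
        (fun n => |∫ v in (u i)..(u (i+1)), (f (xs i) (v + m n) - f (xs i) v) / (m n)|)
        atTop (𝓝 |f (xs i) (u (i+1)) - f (xs i) (u i)|) := by
      intro i hi
      exact (msA_tendsto (f₂ := f₂) (x := xs i) hdiff (hus i).1.le (hu (Nat.le_succ i))
        (hus (i+1)).2 hmpos hm0).abs
    have hsum_td : Tendsto (fun n => ∑ i ∈ Finset.range N,
        |∫ v in (u i)..(u (i+1)), (f (xs i) (v + m n) - f (xs i) v) / (m n)|) atTop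
        (𝓝 (∑ i ∈ Finset.range N, |f (xs i) (u (i+1)) - f (xs i) (u i)|)) :=
      tendsto_finset_sum _ htds
    have hsum_bd : ∀ n, (∑ i ∈ Finset.range N,
        |∫ v in (u i)..(u (i+1)), (f (xs i) (v + m n) - f (xs i) v) / (m n)|) ≤ C := by
      intro n
      rw [← ENNReal.ofReal_le_ofReal_iff hC0,
        ENNReal.ofReal_sum_of_nonneg (fun i _ => abs_nonneg _)]
      calc ∑ i ∈ Finset.range N,
            ENNReal.ofReal |∫ v in (u i)..(u (i+1)), (f (xs i) (v + m n) - f (xs i) v) / (m n)|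
          ≤ ∑ i ∈ Finset.range N, ∫⁻ t in Ioo (u i) (u (i+1)) ∩ msS (m n), msG f (m n) t := by
            apply Finset.sum_le_sum
            intro i hi
            apply msA_bound (f₂ := f₂) (x := xs i) hdiff (hus i).1.le (hu (Nat.le_succ i))
              (hmpos n)
            have hle : u (i+1) ≤ u N := by
              rcases Nat.lt_or_ge (i+1) N with h | h
              · exact hu h.le
              · have : i + 1 = N := le_antisymm (by
                  have := Finset.mem_range.1 hi; omega) h
                rw [this]
            have : m n ≤ 1 - u N := by
              rw [hm]
              rw [div_le_iff₀ (by positivity)]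
              nlinarith [Nat.cast_nonneg (α := ℝ) n, hmpos n]
            linarith
        _ ≤ ∫⁻ t in Ioo (u 0) (u N) ∩ msS (m n), msG f (m n) t :=
            ms_lint_sum_Ioo _ u hu _ (msS_measurable (m n)) N
        _ ≤ ∫⁻ t in Ioo (0:ℝ) 1 ∩ msS (m n), msG f (m n) t := by
            apply lintegral_mono_set
            intro t ht
            exact ⟨⟨(hus 0).1.trans ht.1.1, ht.1.2.trans (hus N).2⟩, ht.2⟩
        _ ≤ ENNReal.ofReal C := hCbd (m n) (hmpos n)
    have hfin : (∑ i ∈ Finset.range N, |f (xs i) (u (i+1)) - f (xs i) (u i)|) ≤ C :=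
      le_of_tendsto hsum_td (Eventually.of_forall hsum_bd)
    calc ∑ i ∈ Finset.range N, edist (msV f X (u (i+1))) (msV f X (u i))
        = ENNReal.ofReal (∑ i ∈ Finset.range N, |msV f X (u (i+1)) - msV f X (u i)|) := by
          rw [ENNReal.ofReal_sum_of_nonneg (fun i _ => abs_nonneg _)]
          exact Finset.sum_congr rfl fun i _ => hedist i
      _ ≤ ENNReal.ofReal C := by
          apply ENNReal.ofReal_le_ofReal
          calc ∑ i ∈ Finset.range N, |msV f X (u (i+1)) - msV f X (u i)|
              ≤ ∑ i ∈ Finset.range N, |f (xs i) (u (i+1)) - f (xs i) (u i)| :=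
                Finset.sum_le_sum fun i _ => hxs i
            _ ≤ C := hfin
  intro a ha b hb
  unfold BoundedVariationOn
  apply ne_top_of_le_ne_top (b := ENNReal.ofReal C) ENNReal.ofReal_ne_top
  exact le_trans (eVariationOn.mono _ Set.inter_subset_left) hbv

lemma msV_ae_deriv
    (hdiff : ∀ x : 𝒳, ∀ t ∈ Icc (0:ℝ) 1, HasDerivWithinAt (f x) (f₂ x t) (Icc (0:ℝ) 1) t)
    (hequi : AbsolutelyEquicontinuous f)
    (hopt : ∀ t ∈ Icc (0:ℝ) 1, ∀ x : 𝒳, f x t ≤ f (X t) t) :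
    ∀ᵐ s, s ∈ Ioo (0:ℝ) 1 → HasDerivAt (msV f X) (f₂ (X s) s) s := by
  have hae := (msV_bv (f₂ := f₂) hdiff hequi hopt).ae_differentiableWithinAt_of_mem
  filter_upwards [hae] with s hs hsmem
  have hd : DifferentiableAt ℝ (msV f X) s :=
    (hs hsmem).differentiableAt (Ioo_mem_nhds hsmem.1 hsmem.2)
  have hsIcc : s ∈ Icc (0:ℝ) 1 := Ioo_subset_Icc_self hsmem
  set w := fun u => msV f X u - f (X s) (msClamp u) with hw
  have hmin : ∀ u, w s ≤ w u := by
    intro u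
    have hu : msClamp u ∈ Icc (0:ℝ) 1 := msClamp_mem u
    have h1 : f (X s) (msClamp u) ≤ msV f X u := by
      unfold msV
      exact hopt (msClamp u) hu (X s)
    have h2 : w s = 0 := by
      rw [hw]
      simp only [msClamp_eq hsIcc, msV_eq hsIcc, sub_self]
    rw [h2, hw]
    simp only
    linarith
  have hFd : HasDerivAt (fun u => f (X s) (msClamp u)) (f₂ (X s) s) s := by
    have h0 := (hdiff (X s) s hsIcc).hasDerivAt (Icc_mem_nhds hsmem.1 hsmem.2)
    apply h0.congr_of_eventuallyEq
    filter_upwards [Ioo_mem_nhds hsmem.1 hsmem.2] with u hu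
    rw [msClamp_eq (Ioo_subset_Icc_self hu)]
  have hV : HasDerivAt (msV f X) (deriv (msV f X) s) s := hd.hasDerivAt
  have hwd : HasDerivAt w (deriv (msV f X) s - f₂ (X s) s) s := hV.sub hFd
  have hlm : IsLocalMin w s := Filter.Eventually.of_forall hmin
  have hzero := hlm.hasDerivAt_eq_zero hwd
  have : deriv (msV f X) s = f₂ (X s) s := by linarith [hzero, sub_eq_zero.1 hzero]
  rwa [this] at hV


lemma ms_slope_tendsto {g : ℝ → ℝ} {s d : ℝ} (h : HasDerivAt g d s)
    {m : ℕ → ℝ} (hmpos : ∀ n, 0 < m n) (hm0 : Tendsto m atTop (𝓝 0)) :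
    Tendsto (fun n => (g (s + m n) - g s) / m n) atTop (𝓝 d) := by
  have h1 : Tendsto (slope g s) (𝓝[≠] s) (𝓝 d) := hasDerivAt_iff_tendsto_slope.1 h
  have h2 : Tendsto (fun n => s + m n) atTop (𝓝[≠] s) := by
    apply tendsto_nhdsWithin_of_tendsto_nhds_of_eventually_within
    · have := (tendsto_const_nhds (x := s) (f := atTop (α := ℕ))).add hm0
      simpa using this
    · exact Eventually.of_forall fun n => by
        simp only [mem_compl_iff, mem_singleton_iff]
        intro hc
        nlinarith [hmpos n, congrArg (fun z => z - s) hc]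
  have := h1.comp h2
  apply this.congr
  intro n
  simp [slope_def_field]

lemma msD_int
    (hdiff : ∀ x : 𝒳, ∀ t ∈ Icc (0:ℝ) 1, HasDerivWithinAt (f x) (f₂ x t) (Icc (0:ℝ) 1) t)
    (hequi : AbsolutelyEquicontinuous f)
    (hopt : ∀ t ∈ Icc (0:ℝ) 1, ∀ x : 𝒳, f x t ≤ f (X t) t) :
    IntegrableOn (deriv (msV f X)) (Icc (0:ℝ) 1) volume ∧
      (∀ᵐ s ∂volume.restrict (Icc (0:ℝ) 1), deriv (msV f X) s = f₂ (X s) s) := by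
  obtain ⟨C, hC0, hCbd⟩ := msG_global hequi
  obtain ⟨δ1, hδ1, hmod⟩ := msV_unif (f₂ := f₂) hdiff hequi hopt 1 one_pos
  have hVd := msV_ae_deriv (f₂ := f₂) hdiff hequi hopt
  have hVc : Continuous (msV f X) := msV_continuous (f₂ := f₂) hdiff hequi hopt
  have hJ : ∀ᵐ s ∂volume.restrict (Icc (0:ℝ) 1), s ∈ Ioo (0:ℝ) 1 := by
    have h01 : ∀ᵐ s : ℝ, s ∉ ({0, 1} : Set ℝ) :=
      (Set.toFinite ({0, 1} : Set ℝ)).countable.ae_notMem volume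
    filter_upwards [ae_restrict_mem measurableSet_Icc, ae_restrict_of_ae h01] with s h1 h2
    simp only [mem_insert_iff, mem_singleton_iff, not_or] at h2
    exact ⟨lt_of_le_of_ne h1.1 (Ne.symm h2.1), lt_of_le_of_ne h1.2 h2.2⟩
  have haeq : ∀ᵐ s ∂volume.restrict (Icc (0:ℝ) 1), deriv (msV f X) s = f₂ (X s) s := by
    filter_upwards [hJ, ae_restrict_of_ae hVd] with s h1 h2
    exact (h2 h1).deriv
  refine ⟨⟨(measurable_deriv _).aestronglyMeasurable, ?_⟩, haeq⟩
  unfold HasFiniteIntegral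
  set mm : ℕ → ℝ := fun n => 1 / (n + 1) with hmm
  have hmpos : ∀ n, 0 < mm n := fun n => by positivity
  have hm0 : Tendsto mm atTop (𝓝 0) := tendsto_one_div_add_atTop_nhds_zero_nat
  set Wn : ℕ → ℝ → ℝ := fun n s => (msV f X (s + mm n) - msV f X s) / mm n with hWn
  have hWmeas : ∀ n, Measurable (fun s => ENNReal.ofReal |Wn n s|) := by
    intro n
    apply Measurable.ennreal_ofReal
    apply Continuous.measurable
    apply Continuous.abs
    exact ((hVc.comp (continuous_id.add continuous_const)).sub hVc).div_const _
  have hptw : ∀ᵐ s : ℝ, s ∈ Ioo (0:ℝ) 1 →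
      Tendsto (fun n => ENNReal.ofReal |Wn n s|) atTop (𝓝 (ENNReal.ofReal |deriv (msV f X) s|)) := by
    filter_upwards [hVd] with s h hs
    have hW : Tendsto (fun n => Wn n s) atTop (𝓝 (deriv (msV f X) s)) := by
      rw [(h hs).deriv]
      exact ms_slope_tendsto (h hs) hmpos hm0
    exact (ENNReal.continuous_ofReal.tendsto _).comp hW.abs
  calc ∫⁻ s in Icc (0:ℝ) 1, ‖deriv (msV f X) s‖₊
      = ∫⁻ s in Ioo (0:ℝ) 1, ENNReal.ofReal |deriv (msV f X) s| := by
        rw [Measure.restrict_congr_set Ioo_ae_eq_Icc]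
        congr 1
        ext s
        exact Real.enorm_eq_ofReal_abs _
    _ ≤ ∫⁻ s in Ioo (0:ℝ) 1, Filter.liminf (fun n => ENNReal.ofReal |Wn n s|) atTop := by
        apply lintegral_mono_ae
        rw [ae_restrict_iff' measurableSet_Ioo]
        filter_upwards [hptw] with s h hs
        rw [(h hs).liminf_eq]
    _ ≤ Filter.liminf (fun n => ∫⁻ s in Ioo (0:ℝ) 1, ENNReal.ofReal |Wn n s|) atTop :=
        lintegral_liminf_le hWmeas
    _ ≤ ENNReal.ofReal (C + 1) := by
        apply Filter.liminf_le_of_frequently_le'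
        apply Filter.Eventually.frequently
        have hev : ∀ᶠ n in atTop, mm n < δ1 := hm0.eventually (gt_mem_nhds hδ1)
        filter_upwards [hev] with n hn
        have hsplit : Ioo (0:ℝ) 1 ⊆ Ioc 0 (1 - mm n) ∪ Ioo (1 - mm n) 1 := by
          intro s hs
          rcases le_or_gt s (1 - mm n) with h | h
          · exact Or.inl ⟨hs.1, h⟩
          · exact Or.inr ⟨h, hs.2⟩
        have hp1 : (∫⁻ s in Ioc (0:ℝ) (1 - mm n), ENNReal.ofReal |Wn n s|)
            ≤ ENNReal.ofReal C := by
          calc ∫⁻ s in Ioc (0:ℝ) (1 - mm n), ENNReal.ofReal |Wn n s|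
              ≤ ∫⁻ s in Ioc (0:ℝ) (1 - mm n), msG f (mm n) s := by
                apply lintegral_mono_ae
                rw [ae_restrict_iff' measurableSet_Ioc]
                apply ae_of_all
                intro s hs
                apply msV_quot_le hopt (hmpos n)
                exact ⟨⟨hs.1.le, by linarith [hs.2, hmpos n]⟩,
                  ⟨by linarith [hs.1, hmpos n], by linarith [hs.2]⟩⟩
            _ ≤ ∫⁻ s in Ioo (0:ℝ) 1 ∩ msS (mm n), msG f (mm n) s := by
                apply lintegral_mono_set
                intro s hs
                exact ⟨⟨hs.1, by nlinarith [hmpos n, hs.2]⟩, ⟨hs.1.le, by linarith [hs.2, hmpos n]⟩,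
                  ⟨by linarith [hs.1, hmpos n], by linarith [hs.2]⟩⟩
            _ ≤ ENNReal.ofReal C := hCbd (mm n) (hmpos n)
        have hp2 : (∫⁻ s in Ioo (1 - mm n) 1, ENNReal.ofReal |Wn n s|)
            ≤ ENNReal.ofReal 1 := by
          have hb : ∀ s ∈ Ioo (1 - mm n) 1, ENNReal.ofReal |Wn n s|
              ≤ ENNReal.ofReal (1 / mm n) := by
            intro s hs
            apply ENNReal.ofReal_le_ofReal
            have hmod' := hmod (s + mm n) s
              (by rw [add_sub_cancel_left, abs_of_pos (hmpos n)]; exact hn)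
            rw [hWn]
            simp only
            rw [abs_div, abs_of_pos (hmpos n)]
            gcongr
          calc ∫⁻ s in Ioo (1 - mm n) 1, ENNReal.ofReal |Wn n s|
              ≤ ∫⁻ _s in Ioo (1 - mm n) 1, ENNReal.ofReal (1 / mm n) := by
                apply lintegral_mono_ae
                rw [ae_restrict_iff' measurableSet_Ioo]
                exact ae_of_all _ hb
            _ = ENNReal.ofReal (1 / mm n) * volume (Ioo (1 - mm n) 1) :=
                setLIntegral_const _ _
            _ = ENNReal.ofReal 1 := by
                rw [Real.volume_Ioo, ← ENNReal.ofReal_mul (by positivity)]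
                congr 1
                have := hmpos n
                field_simp
                ring
        calc ∫⁻ s in Ioo (0:ℝ) 1, ENNReal.ofReal |Wn n s|
            ≤ ∫⁻ s in Ioc (0:ℝ) (1 - mm n) ∪ Ioo (1 - mm n) 1, ENNReal.ofReal |Wn n s| :=
              lintegral_mono_set hsplit
          _ ≤ (∫⁻ s in Ioc (0:ℝ) (1 - mm n), ENNReal.ofReal |Wn n s|)
              + ∫⁻ s in Ioo (1 - mm n) 1, ENNReal.ofReal |Wn n s| := by
              refine le_trans (lintegral_mono' (Measure.restrict_union_le _ _) le_rfl) ?_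
              rw [lintegral_add_measure]
          _ ≤ ENNReal.ofReal C + ENNReal.ofReal 1 := add_le_add hp1 hp2
          _ = ENNReal.ofReal (C + 1) := by rw [← ENNReal.ofReal_add hC0 zero_le_one]
    _ < ⊤ := ENNReal.ofReal_lt_top

end MSAux

/-- **Milgrom–Segal envelope theorem (refined form).** Under the basic assumptions, every
optimal decision rule `X : [0,1] → 𝒳` satisfies the envelope formula
`f (X t) t = f (X 0) 0 + ∫₀ᵗ f₂ (X s) s ds` for every `t ∈ [0,1]`. -/
theorem milgrom_segal_envelope
    {𝒳 : Type*} [Nonempty 𝒳] (f f₂ : 𝒳 → ℝ → ℝ)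
    (hdiff : ∀ x : 𝒳, ∀ t ∈ Icc (0:ℝ) 1, HasDerivWithinAt (f x) (f₂ x t) (Icc (0:ℝ) 1) t)
    (hequi : AbsolutelyEquicontinuous f)
    (X : ℝ → 𝒳)
    (hopt : ∀ t ∈ Icc (0:ℝ) 1, ∀ x : 𝒳, f x t ≤ f (X t) t) :
    IntegrableOn (fun s => f₂ (X s) s) (Icc (0:ℝ) 1) volume ∧
      ∀ t ∈ Icc (0:ℝ) 1, f (X t) t = f (X 0) 0 + ∫ s in (0:ℝ)..t, f₂ (X s) s := by
  classical
  have hVc : Continuous (msV f X) := msV_continuous (f₂ := f₂) hdiff hequi hopt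
  obtain ⟨hDint, haeq⟩ := msD_int (f₂ := f₂) hdiff hequi hopt
  have hphi : IntegrableOn (fun s => f₂ (X s) s) (Icc (0:ℝ) 1) volume :=
    hDint.congr haeq
  refine ⟨hphi, ?_⟩
  have hVd := msV_ae_deriv (f₂ := f₂) hdiff hequi hopt
  set V := msV f X with hV
  set D := deriv V with hDdef
  have main : ∀ t ∈ Ioo (0:ℝ) 1, V t - V 0 = ∫ s in (0:ℝ)..t, D s := by
    intro t ht
    set m : ℕ → ℝ := fun n => (1 - t) / (n + 1) with hm
    have hmpos : ∀ n, 0 < m n := fun n => by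
      apply div_pos (by linarith [ht.2]); positivity
    have hmle : ∀ n, m n ≤ 1 - t := by
      intro n
      rw [hm]
      rw [div_le_iff₀ (by positivity)]
      nlinarith [Nat.cast_nonneg (α := ℝ) n, ht.2]
    have hm0 : Tendsto m atTop (𝓝 0) := by
      have h1 := tendsto_one_div_add_atTop_nhds_zero_nat.const_mul (1 - t)
      rw [mul_zero] at h1
      exact h1.congr fun n => by rw [hm, mul_one_div]
    set hseq : ℕ → ℝ → ℝ := fun n s => (V (s + m n) - V s) / (m n) with hhseq
    have hseqC : ∀ n, Continuous (hseq n) := fun n =>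
      ((hVc.comp (continuous_id.add continuous_const)).sub hVc).div_const _
    set P : ℝ → ℝ := fun u => ∫ v in (0:ℝ)..u, V v with hP
    have hPd : ∀ r : ℝ, HasDerivAt P (V r) r := fun r =>
      intervalIntegral.integral_hasDerivAt_right (hVc.intervalIntegrable 0 r)
        (hVc.stronglyMeasurableAtFilter volume (𝓝 r)) hVc.continuousAt
    have hkey : ∀ n, (∫ s in (0:ℝ)..t, hseq n s)
        = ((P (t + m n) - P t) - (P (0 + m n) - P 0)) / (m n) := by
      intro n
      have h4 : ∀ c d : ℝ, (∫ u in c..d, V u) = P d - P c := by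
        intro c d
        rw [hP, ← intervalIntegral.integral_interval_sub_left (hVc.intervalIntegrable 0 d)
          (hVc.intervalIntegrable 0 c)]
      rw [hhseq]
      simp only
      rw [intervalIntegral.integral_div]
      congr 1
      have hi1 : IntervalIntegrable (fun u : ℝ => V (u + m n)) volume 0 t :=
        Continuous.intervalIntegrable (by fun_prop) 0 t
      rw [intervalIntegral.integral_sub hi1 (hVc.intervalIntegrable 0 t)]
      have h3 : (∫ u in (0:ℝ)..t, V (u + m n)) = ∫ u in (0 + m n)..(t + m n), V u :=
        intervalIntegral.integral_comp_add_right V (m n)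
      rw [h3, h4, h4]
      ring
    have havg : Tendsto (fun n => ∫ s in (0:ℝ)..t, hseq n s) atTop (𝓝 (V t - V 0)) := by
      have h1 := ms_slope_tendsto (hPd t) hmpos hm0
      have h2 := ms_slope_tendsto (hPd 0) hmpos hm0
      have h3 := h1.sub h2
      rw [funext hkey]
      apply h3.congr
      intro n
      rw [div_sub_div_same]
    set μA := volume.restrict (Ioo (0:ℝ) t) with hμA
    haveI : IsFiniteMeasure μA :=
      ⟨by rw [hμA, Measure.restrict_apply_univ]; exact measure_Ioo_lt_top⟩
    have hf : ∀ n, AEStronglyMeasurable (hseq n) μA := fun n => (hseqC n).aestronglyMeasurable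
    have hDA : IntegrableOn D (Ioo (0:ℝ) t) volume :=
      hDint.mono_set (fun s hs => ⟨hs.1.le, hs.2.le.trans ht.2.le⟩)
    have hg : MemLp D 1 μA := memLp_one_iff_integrable.2 hDA
    have hui : UnifIntegrable hseq 1 μA := by
      intro ε hε
      obtain ⟨δ, hδ, hT⟩ := hequi ε hε
      refine ⟨δ/2, by linarith, ?_⟩
      intro n S hS hμS
      rw [eLpNorm_indicator_eq_eLpNorm_restrict hS, hμA, Measure.restrict_restrict hS]
      set S' := S ∩ Ioo (0:ℝ) t with hS'
      have hvol : volume S' < ENNReal.ofReal δ := by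
        have h1 : μA S = volume S' := by rw [hμA, Measure.restrict_apply hS]
        rw [← h1]
        exact lt_of_le_of_lt hμS ((ENNReal.ofReal_lt_ofReal_iff hδ).2 (by linarith))
      obtain ⟨U, hUsub, hUopen, hUvol⟩ := Set.exists_isOpen_lt_of_lt S' _ hvol
      have hTbd := hT (U ∩ Ioo 0 1) (hUopen.inter isOpen_Ioo)
        (fun u hu => ⟨hu.2.1.le, hu.2.2.le⟩)
        (lt_of_le_of_lt (measure_mono Set.inter_subset_left) hUvol) (m n) (hmpos n)
      have hsub : S' ⊆ (U ∩ Ioo 0 1) ∩ msS (m n) := by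
        intro s hs
        have hsi : s ∈ Ioo (0:ℝ) t := hs.2
        have hs1 : s ∈ Icc (0:ℝ) 1 := ⟨hsi.1.le, hsi.2.le.trans ht.2.le⟩
        have hs2 : s + m n ∈ Icc (0:ℝ) 1 := by
          constructor
          · linarith [hsi.1, hmpos n]
          · linarith [hsi.2, hmle n]
        exact ⟨⟨hUsub hs, ⟨hsi.1, lt_of_lt_of_le hsi.2 ht.2.le⟩⟩, hs1, hs2⟩
      calc eLpNorm (hseq n) 1 (volume.restrict S')
          = ∫⁻ s in S', (‖hseq n s‖₊ : ℝ≥0∞) := eLpNorm_one_eq_lintegral_enorm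
        _ ≤ ∫⁻ s in S', msG f (m n) s := by
            apply lintegral_mono_ae
            rw [ae_restrict_iff' (hS.inter measurableSet_Ioo)]
            apply ae_of_all
            intro s hs
            rw [← enorm_eq_nnnorm, Real.enorm_eq_ofReal_abs]
            apply msV_quot_le hopt (hmpos n)
            have hsi : s ∈ Ioo (0:ℝ) t := hs.2
            exact ⟨⟨hsi.1.le, hsi.2.le.trans ht.2.le⟩,
              ⟨by linarith [hsi.1, hmpos n], by linarith [hsi.2, hmle n]⟩⟩
        _ ≤ ∫⁻ s in (U ∩ Ioo 0 1) ∩ msS (m n), msG f (m n) s := lintegral_mono_set hsub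
        _ ≤ ENNReal.ofReal ε := hTbd.le
    have hptw : ∀ᵐ s ∂μA, Tendsto (fun n => hseq n s) atTop (𝓝 (D s)) := by
      rw [hμA]
      filter_upwards [ae_restrict_mem measurableSet_Ioo, ae_restrict_of_ae hVd] with s h1 h2
      have hs1 : s ∈ Ioo (0:ℝ) 1 := ⟨h1.1, h1.2.trans ht.2⟩
      have h3 := ms_slope_tendsto (h2 hs1) hmpos hm0
      rw [hDdef, (h2 hs1).deriv]
      exact h3
    have hLp := tendsto_Lp_finite_of_tendsto_ae le_rfl ENNReal.one_ne_top hf hg hui hptw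
    have hseqInt : ∀ n, Integrable (hseq n) μA := by
      intro n
      rw [hμA]
      exact ((hseqC n).integrableOn_Ioc).mono_set Ioo_subset_Ioc_self
    have hIildiff : ∀ n, |(∫ s in (0:ℝ)..t, hseq n s) - ∫ s in (0:ℝ)..t, D s|
        ≤ (eLpNorm (hseq n - D) 1 μA).toReal := by
      intro n
      have h1 : (∫ s in (0:ℝ)..t, hseq n s) = ∫ s, hseq n s ∂μA := by
        rw [intervalIntegral.integral_of_le ht.1.le, integral_Ioc_eq_integral_Ioo, hμA]
      have h2 : (∫ s in (0:ℝ)..t, D s) = ∫ s, D s ∂μA := by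
        rw [intervalIntegral.integral_of_le ht.1.le, integral_Ioc_eq_integral_Ioo, hμA]
      rw [h1, h2, ← MeasureTheory.integral_sub (hseqInt n) (memLp_one_iff_integrable.1 hg)]
      have hsubInt : Integrable (hseq n - D) μA := (hseqInt n).sub (memLp_one_iff_integrable.1 hg)
      calc |∫ s, (hseq n s - D s) ∂μA| ≤ ∫ s, ‖hseq n s - D s‖ ∂μA := by
            rw [← Real.norm_eq_abs]
            exact MeasureTheory.norm_integral_le_integral_norm _
        _ = (eLpNorm (hseq n - D) 1 μA).toReal := by
            rw [eLpNorm_one_eq_lintegral_enorm,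
              ← ofReal_integral_norm_eq_lintegral_enorm hsubInt,
              ENNReal.toReal_ofReal (integral_nonneg (fun s => norm_nonneg _))]
            simp only [Pi.sub_apply]
    have htofin : Tendsto (fun n => (eLpNorm (hseq n - D) 1 μA).toReal) atTop (𝓝 0) := by
      have h := (ENNReal.tendsto_toReal (a := 0) (by simp)).comp hLp
      exact h
    have hIdiff0 : Tendsto
        (fun n => (∫ s in (0:ℝ)..t, hseq n s) - ∫ s in (0:ℝ)..t, D s) atTop (𝓝 0) := by
      apply squeeze_zero_norm _ htofin
      intro n
      rw [Real.norm_eq_abs]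
      exact hIildiff n
    have hIconv : Tendsto (fun n => ∫ s in (0:ℝ)..t, hseq n s) atTop
        (𝓝 (∫ s in (0:ℝ)..t, D s)) := by
      have h := hIdiff0.add_const (∫ s in (0:ℝ)..t, D s)
      rw [zero_add] at h
      apply h.congr
      intro n
      ring
    exact tendsto_nhds_unique havg hIconv
  -- conversion helper
  have hconv : ∀ t ∈ Icc (0:ℝ) 1, V t - V 0 = (∫ s in (0:ℝ)..t, D s) →
      f (X t) t = f (X 0) 0 + ∫ s in (0:ℝ)..t, f₂ (X s) s := by
    intro t htI heq
    have hint_eq : (∫ s in (0:ℝ)..t, D s) = ∫ s in (0:ℝ)..t, f₂ (X s) s := by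
      apply intervalIntegral.integral_congr_ae
      have hglob := ae_imp_of_ae_restrict haeq
      filter_upwards [hglob] with s hs hmem
      apply hs
      rw [uIoc_of_le htI.1] at hmem
      exact ⟨hmem.1.le, hmem.2.trans htI.2⟩
    have hv1 : V t = f (X t) t := msV_eq htI
    have hv0 : V 0 = f (X 0) 0 := msV_eq ⟨le_refl 0, zero_le_one⟩
    rw [hv1, hv0, hint_eq] at heq
    linarith
  intro t htI
  rcases eq_or_lt_of_le htI.1 with h0 | h0
  · rw [← h0]
    simp
  rcases eq_or_lt_of_le htI.2 with h1 | h1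
  · -- t = 1
    subst h1
    apply hconv 1 htI
    have hprim : ContinuousOn (fun u => ∫ s in (0:ℝ)..u, D s) (Icc (0:ℝ) 1) := by
      apply (continuousOn_primitive hDint).congr
      intro u hu
      show (∫ s in (0:ℝ)..u, D s) = _
      rw [intervalIntegral.integral_of_le hu.1]
    haveI := right_nhdsWithin_Ioo_neBot (zero_lt_one (α := ℝ))
    have hlim : Tendsto (fun u => V u - V 0 - ∫ s in (0:ℝ)..u, D s) (𝓝[Ioo (0:ℝ) 1] 1)
        (𝓝 (V 1 - V 0 - ∫ s in (0:ℝ)..1, D s)) := by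
      apply Tendsto.sub
      · exact ((hVc.tendsto 1).sub tendsto_const_nhds).mono_left nhdsWithin_le_nhds
      · have h := (hprim 1 (by norm_num)).tendsto
        apply h.mono_left
        apply nhdsWithin_mono
        exact Ioo_subset_Icc_self
    have h0' : Tendsto (fun u => V u - V 0 - ∫ s in (0:ℝ)..u, D s) (𝓝[Ioo (0:ℝ) 1] 1)
        (𝓝 0) := by
      apply Tendsto.congr' _ (tendsto_const_nhds (x := (0:ℝ)))
      filter_upwards [eventually_mem_nhdsWithin] with u hu
      rw [main u hu]
      ring
    have := tendsto_nhds_unique h0' hlim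
    linarith [this]
  · exact hconv t htI (main t ⟨h0, h1⟩)
end

section
/- Housekeeping lemma: Under the basic and classical assumptions, a Lipschitz continuous decision rule X : [0,1] → 𝒳 satisfies the outer first-order condition if and only if it satisfies the first-order condition a.e. -/
open MeasureTheory Set Filter intervalIntegral

/-- **Housekeeping lemma.** Under the basic assumptions (differentiability of each `f x ·` on
`[0,1]` and absolute equi-continuity of the family) and the classical assumptions (`𝒳` a
convex subset of `ℝⁿ`, the action derivative `f₁` exists and is bounded, `X` Lipschitz
continuous), a decision rule `X : [0,1] → 𝒳` satisfies the outer first-order condition iff it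
satisfies the first-order condition a.e. -/
theorem housekeeping_lemma
    {n : ℕ} {𝒳 : Set (EuclideanSpace ℝ (Fin n))} (hne : 𝒳.Nonempty) (hconv : Convex ℝ 𝒳)
    (f : EuclideanSpace ℝ (Fin n) → ℝ → ℝ)
    (hdiff : ∀ x ∈ 𝒳, DifferentiableOn ℝ (f x) (Icc (0:ℝ) 1))
    (hequi : AbsolutelyEquicontinuous fun x : 𝒳 => f x.1)
    (f₁ : EuclideanSpace ℝ (Fin n) → ℝ → (EuclideanSpace ℝ (Fin n) →L[ℝ] ℝ))
    (hf₁ : ∀ x ∈ 𝒳, ∀ t ∈ Icc (0:ℝ) 1, HasFDerivWithinAt (fun y => f y t) (f₁ x t) 𝒳 x)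
    (hf₁bdd : ∃ K : ℝ, ∀ x ∈ 𝒳, ∀ t ∈ Icc (0:ℝ) 1, ‖f₁ x t‖ ≤ K)
    (X : ℝ → EuclideanSpace ℝ (Fin n))
    (hX𝒳 : ∀ t ∈ Icc (0:ℝ) 1, X t ∈ 𝒳)
    (hLip : ∃ L : NNReal, LipschitzOnWith L X (Icc (0:ℝ) 1)) :
    (∀ r ∈ Ioo (0:ℝ) 1, ∀ t ∈ Ioo (0:ℝ) 1,
        HasDerivAt (fun m : ℝ => ∫ s in r..t, f (X (s + m)) s) 0 0) ↔
    (∀ᵐ t ∂(volume.restrict (Ioo (0:ℝ) 1)),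
        HasDerivAt (fun m : ℝ => f (X (t + m)) t) 0 0) := by
  classical
  obtain ⟨K₀, hK₀⟩ := hf₁bdd
  obtain ⟨L, hL⟩ := hLip
  set K : ℝ := max K₀ 0 with hKdef
  have hKnn : 0 ≤ K := le_max_right _ _
  have hK : ∀ x ∈ 𝒳, ∀ t ∈ Icc (0:ℝ) 1, ‖f₁ x t‖ ≤ K :=
    fun x hx t ht => (hK₀ x hx t ht).trans (le_max_left _ _)
  set C : ℝ := K * L with hCdef
  have hCnn : 0 ≤ C := mul_nonneg hKnn L.coe_nonneg
  -- `f · t` is `K`-Lipschitz on `𝒳`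
  have lipf : ∀ t ∈ Icc (0:ℝ) 1, ∀ x ∈ 𝒳, ∀ y ∈ 𝒳, ‖f y t - f x t‖ ≤ K * ‖y - x‖ :=
    fun t ht x hx y hy =>
      Convex.norm_image_sub_le_of_norm_hasFDerivWithin_le
        (fun z hz => hf₁ z hz t ht) (fun z hz => hK z hz t ht) hconv hx hy
  -- the key estimate
  have keyb : ∀ t ∈ Icc (0:ℝ) 1, ∀ u ∈ Icc (0:ℝ) 1, ∀ v ∈ Icc (0:ℝ) 1,
      |f (X v) t - f (X u) t| ≤ C * |v - u| := by
    intro t ht u hu v hv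
    have h1 : ‖f (X v) t - f (X u) t‖ ≤ K * ‖X v - X u‖ :=
      lipf t ht (X u) (hX𝒳 u hu) (X v) (hX𝒳 v hv)
    have h2 : dist (X v) (X u) ≤ (L : ℝ) * dist v u := hL.dist_le_mul v hv u hu
    rw [dist_eq_norm, Real.dist_eq] at h2
    rw [Real.norm_eq_abs] at h1
    calc |f (X v) t - f (X u) t| ≤ K * ‖X v - X u‖ := h1
      _ ≤ K * ((L : ℝ) * |v - u|) := mul_le_mul_of_nonneg_left h2 hKnn
      _ = C * |v - u| := by rw [hCdef]; ring
  -- continuity in time of `s ↦ f (X (u s)) s`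
  have contf : ∀ x ∈ 𝒳, ContinuousOn (f x) (Icc (0:ℝ) 1) := fun x hx =>
    (hdiff x hx).continuousOn
  have cont_aux : ∀ (u : ℝ → ℝ) (A : Set ℝ), A ⊆ Icc (0:ℝ) 1 → ContinuousOn u A →
      MapsTo u A (Icc (0:ℝ) 1) → ContinuousOn (fun s => f (X (u s)) s) A := by
    intro u A hA hu hmaps s₀ hs₀
    have h2 : Tendsto (fun s => f (X (u s₀)) s) (nhdsWithin s₀ A) (nhds (f (X (u s₀)) s₀)) :=
      ((contf (X (u s₀)) (hX𝒳 _ (hmaps hs₀))).mono hA) s₀ hs₀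
    have h1 : Tendsto (fun s => f (X (u s)) s - f (X (u s₀)) s) (nhdsWithin s₀ A) (nhds 0) := by
      rw [tendsto_zero_iff_norm_tendsto_zero]
      have hbound : ∀ s ∈ A, ‖f (X (u s)) s - f (X (u s₀)) s‖ ≤ C * |u s - u s₀| := by
        intro s hs
        have := keyb s (hA hs) (u s₀) (hmaps hs₀) (u s) (hmaps hs)
        simpa [Real.norm_eq_abs] using this
      have htend : Tendsto (fun s => C * |u s - u s₀|) (nhdsWithin s₀ A) (nhds 0) := by
        have h3 : Tendsto u (nhdsWithin s₀ A) (nhds (u s₀)) := hu s₀ hs₀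
        have h4 : Tendsto (fun s => |u s - u s₀|) (nhdsWithin s₀ A) (nhds 0) := by
          have h4' := (h3.sub (tendsto_const_nhds (x := u s₀))).abs
          simpa using h4'
        have h5 := h4.const_mul C
        simpa using h5
      exact squeeze_zero' (eventually_nhdsWithin_of_forall fun s _ => norm_nonneg _)
        (eventually_nhdsWithin_of_forall hbound) htend
    have h5 := h1.add h2
    rw [zero_add] at h5
    refine h5.congr fun s => ?_
    ring
  -- Rademacher: X is a.e. differentiable
  have hXdiff : ∀ᵐ t ∂(volume : Measure ℝ), t ∈ Icc (0:ℝ) 1 →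
      DifferentiableWithinAt ℝ X (Icc (0:ℝ) 1) t :=
    hL.ae_differentiableWithinAt_of_mem
  set F' : ℝ → ℝ := fun t => f₁ (X t) t (deriv X t) with hF'def
  -- chain rule: a.e. differentiability of `m ↦ f (X (t+m)) t`
  have hD : ∀ᵐ t ∂(volume : Measure ℝ), t ∈ Ioo (0:ℝ) 1 →
      HasDerivAt (fun m : ℝ => f (X (t + m)) t) (F' t) 0 := by
    filter_upwards [hXdiff] with t hXd ht
    have htIcc : t ∈ Icc (0:ℝ) 1 := Ioo_subset_Icc_self ht
    have hXt : DifferentiableAt ℝ X t :=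
      (hXd htIcc).differentiableAt (Icc_mem_nhds ht.1 ht.2)
    have hXderiv : HasDerivAt X (deriv X t) t := hXt.hasDerivAt
    set ε := min t (1 - t) with hεdef
    have hεpos : 0 < ε := lt_min ht.1 (by linarith [ht.2])
    have hball : ∀ m ∈ Metric.ball (0:ℝ) ε, t + m ∈ Icc (0:ℝ) 1 := by
      intro m hm
      rw [Metric.mem_ball, Real.dist_eq, sub_zero] at hm
      have h1 := abs_lt.1 hm
      have h2 : ε ≤ t := min_le_left _ _
      have h3 : ε ≤ 1 - t := min_le_right _ _
      constructor <;> [linarith [h1.1]; linarith [h1.2]]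
    have hψ : HasDerivWithinAt (fun m : ℝ => X (t + m)) (deriv X t) (Metric.ball (0:ℝ) ε) 0 := by
      have h0 : HasDerivAt (fun m : ℝ => t + m) 1 0 := by
        simpa using (hasDerivAt_id (0:ℝ)).const_add t
      have hXderiv' : HasDerivAt X (deriv X t) ((fun m : ℝ => t + m) 0) := by
        simpa using hXderiv
      have := (hXderiv'.scomp (0:ℝ) h0 : HasDerivAt (X ∘ fun m : ℝ => t + m) _ 0)
      rw [one_smul] at this
      exact this.hasDerivWithinAt
    have houter : HasFDerivWithinAt (fun y => f y t) (f₁ (X t) t) 𝒳 ((fun m : ℝ => X (t + m)) 0) := by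
      simpa using hf₁ (X t) (hX𝒳 t htIcc) t htIcc
    have hmapsto : MapsTo (fun m : ℝ => X (t + m)) (Metric.ball (0:ℝ) ε) 𝒳 :=
      fun m hm => hX𝒳 _ (hball m hm)
    have hcomp := houter.comp_hasDerivWithinAt (0:ℝ) hψ hmapsto
    have := hcomp.hasDerivAt (Metric.ball_mem_nhds 0 hεpos)
    exact this
  have hIooIcc : Ioo (0:ℝ) 1 ⊆ Icc (0:ℝ) 1 := Ioo_subset_Icc_self
  -- measurability of F' on interval pieces
  have measI : ∀ a b : ℝ, 0 < min a b → max a b < 1 →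
      AEStronglyMeasurable F' (volume.restrict (uIoc a b)) := by
    intro a b hab hab'
    set ε := min (min a b) (1 - max a b) with hεdef
    have hεpos : 0 < ε := lt_min hab (by linarith)
    have hIsub : uIoc a b ⊆ Ioo (0:ℝ) 1 := fun s hs =>
      ⟨hab.trans hs.1, lt_of_le_of_lt hs.2 hab'⟩
    have hIsub' : uIoc a b ⊆ Icc (0:ℝ) 1 := fun s hs => hIooIcc (hIsub hs)
    set mseq : ℕ → ℝ := fun j => ε / (j + 2) with hmseqdef
    have hmpos : ∀ j : ℕ, 0 < mseq j := fun j =>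
      div_pos hεpos (by positivity)
    have hmle : ∀ j : ℕ, mseq j ≤ ε := by
      intro j
      rw [hmseqdef]
      rw [div_le_iff₀ (by positivity : (0:ℝ) < (j:ℝ) + 2)]
      nlinarith [hεpos.le, (Nat.cast_nonneg j : (0:ℝ) ≤ j)]
    have hshift : ∀ j : ℕ, ∀ s ∈ uIoc a b, s + mseq j ∈ Icc (0:ℝ) 1 := by
      intro j s hs
      have h1 : ε ≤ 1 - max a b := min_le_right _ _
      have h2 := (hmpos j).le
      have h3 := hmle j
      exact ⟨by nlinarith [(hIsub' hs).1], by nlinarith [hs.2]⟩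
    set G : ℕ → ℝ → ℝ := fun j s => (mseq j)⁻¹ * (f (X (s + mseq j)) s - f (X (s + 0)) s)
      with hGdef
    have hGmeas : ∀ j : ℕ, AEStronglyMeasurable (G j) (volume.restrict (uIoc a b)) := by
      intro j
      have hc1 : ContinuousOn (fun s => f (X (s + mseq j)) s) (uIoc a b) :=
        cont_aux (fun s => s + mseq j) (uIoc a b) hIsub'
          (continuousOn_id.add continuousOn_const) (fun s hs => hshift j s hs)
      have hc2 : ContinuousOn (fun s => f (X (s + 0)) s) (uIoc a b) :=
        cont_aux (fun s => s + 0) (uIoc a b) hIsub'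
          (continuousOn_id.add continuousOn_const) (fun s hs => by
            simpa using hIsub' hs)
      exact ((continuousOn_const.mul (hc1.sub hc2)).aestronglyMeasurable measurableSet_uIoc)
    have hm0 : Tendsto mseq atTop (nhdsWithin (0:ℝ) ({(0:ℝ)}ᶜ : Set ℝ)) := by
      apply tendsto_nhdsWithin_of_tendsto_nhds_of_eventually_within
      · have h1 : Tendsto (fun j : ℕ => ((j:ℝ) + 2)) atTop atTop :=
          tendsto_atTop_add_const_right _ 2 tendsto_natCast_atTop_atTop
        have h2 := h1.inv_tendsto_atTop
        have h3 := h2.const_mul ε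
        simpa [hmseqdef, div_eq_mul_inv, mul_comm] using h3
      · exact Eventually.of_forall fun j => mem_compl_singleton_iff.2 (hmpos j).ne'
    have hae : ∀ᵐ s ∂volume.restrict (uIoc a b), Tendsto (fun j => G j s) atTop (nhds (F' s)) := by
      filter_upwards [ae_restrict_of_ae hD, ae_restrict_mem measurableSet_uIoc] with s hs hsI
      have hder := hs (hIsub hsI)
      have hslope := hasDerivAt_iff_tendsto_slope.1 hder
      have h1 := hslope.comp hm0
      refine h1.congr fun j => ?_
      show slope (fun m : ℝ => f (X (s + m)) s) 0 (mseq j) = G j s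
      rw [slope_def_field]
      rw [hGdef]
      simp only [sub_zero]
      rw [div_eq_inv_mul]
    exact aestronglyMeasurable_of_tendsto_ae atTop hGmeas hae
  -- master: the interval integral has derivative ∫ F'
  have master : ∀ r ∈ Ioo (0:ℝ) 1, ∀ t ∈ Ioo (0:ℝ) 1,
      HasDerivAt (fun m : ℝ => ∫ s in r..t, f (X (s + m)) s) (∫ s in r..t, F' s) 0 := by
    intro r hr t ht
    have ha : 0 < min r t := lt_min hr.1 ht.1
    have hb : max r t < 1 := max_lt hr.2 ht.2
    set ε := min (min r t) (1 - max r t) with hεdef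
    have hεpos : 0 < ε := lt_min ha (by linarith)
    have hIsub : uIoc r t ⊆ Ioo (0:ℝ) 1 := fun s hs =>
      ⟨ha.trans hs.1, lt_of_le_of_lt hs.2 hb⟩
    have hIsub' : uIoc r t ⊆ Icc (0:ℝ) 1 := fun s hs => hIooIcc (hIsub hs)
    have hsub : ∀ s ∈ uIoc r t, ∀ m : ℝ, |m| < ε → s + m ∈ Icc (0:ℝ) 1 := by
      intro s hs m hm
      have h1 := abs_lt.1 hm
      have h2 : ε ≤ min r t := min_le_left _ _
      have h3 : ε ≤ 1 - max r t := min_le_right _ _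
      have h4 : min r t < s := hs.1
      have h5 : s ≤ max r t := hs.2
      exact ⟨by linarith [h1.1], by linarith [h1.2]⟩
    have H := intervalIntegral.hasDerivAt_integral_of_dominated_loc_of_lip
      (F := fun m s => f (X (s + m)) s) (F' := F') (x₀ := (0:ℝ)) (bound := fun _ => C)
      (a := r) (b := t) (μ := volume) (s := Metric.ball (0:ℝ) ε) (Metric.ball_mem_nhds 0 hεpos) ?_ ?_ ?_ ?_ ?_ ?_
    · exact H.2
    · -- hF_meas
      have hev : ∀ᶠ m : ℝ in nhds 0, |m| < ε := by
        filter_upwards [Metric.ball_mem_nhds (0:ℝ) hεpos] with m hm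
        simpa [Real.dist_eq] using hm
      filter_upwards [hev] with m hm
      exact (cont_aux (fun s => s + m) (uIoc r t) hIsub'
        (continuousOn_id.add continuousOn_const)
        (fun s hs => hsub s hs m hm)).aestronglyMeasurable measurableSet_uIoc
    · -- hF_int
      apply ContinuousOn.intervalIntegrable
      apply cont_aux (fun s => s + 0) (uIcc r t)
      · intro s hs
        rcases hs with ⟨h1, h2⟩
        constructor
        · exact le_of_lt (lt_of_lt_of_le ha h1)
        · exact le_trans h2 hb.le
      · exact continuousOn_id.add continuousOn_const
      · intro s hs
        simp only [add_zero]
        exact ⟨le_of_lt (lt_of_lt_of_le ha hs.1), le_trans hs.2 hb.le⟩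
    · -- hF'_meas
      exact measI r t ha hb
    · -- h_lip
      refine Eventually.of_forall fun s hs => ?_
      apply LipschitzOnWith.of_dist_le_mul
      intro m hm m' hm'
      rw [Metric.mem_ball, Real.dist_eq, sub_zero] at hm hm'
      have h1 := keyb s (hIsub' hs) (s + m') (hsub s hs m' hm') (s + m) (hsub s hs m hm)
      have h2 : (Real.nnabs C : ℝ) = C := by
        rw [Real.coe_nnabs, abs_of_nonneg hCnn]
      rw [Real.dist_eq, Real.dist_eq, h2]
      calc |f (X (s + m)) s - f (X (s + m')) s| ≤ C * |s + m - (s + m')| := h1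
        _ = C * |m - m'| := by ring_nf
    · -- bound_integrable
      exact intervalIntegrable_const
    · -- h_diff
      filter_upwards [hD] with s hs hsI
      exact hs (hIsub hsI)
  -- a.e. bound |F'| ≤ C on (0,1)
  have hF'bd : ∀ᵐ t ∂(volume : Measure ℝ), t ∈ Ioo (0:ℝ) 1 → |F' t| ≤ C := by
    filter_upwards [hD] with t hDt ht
    have hder := hDt ht
    have hslope := hasDerivAt_iff_tendsto_slope.1 hder
    set ε := min t (1 - t) with hεdef
    have hεpos : 0 < ε := lt_min ht.1 (by linarith [ht.2])
    have hev : ∀ᶠ m in nhdsWithin (0:ℝ) ({(0:ℝ)}ᶜ : Set ℝ),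
        |slope (fun m : ℝ => f (X (t + m)) t) 0 m| ≤ C := by
      have hball : Metric.ball (0:ℝ) ε ∈ nhds (0:ℝ) := Metric.ball_mem_nhds 0 hεpos
      filter_upwards [nhdsWithin_le_nhds hball, self_mem_nhdsWithin] with m hm hm0
      rw [Metric.mem_ball, Real.dist_eq, sub_zero] at hm
      have h1 := abs_lt.1 hm
      have h2 : ε ≤ t := min_le_left _ _
      have h3 : ε ≤ 1 - t := min_le_right _ _
      have htm : t + m ∈ Icc (0:ℝ) 1 := ⟨by linarith [h1.1], by linarith [h1.2]⟩
      have ht0 : t + 0 ∈ Icc (0:ℝ) 1 := by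
        simpa using hIooIcc ht
      have h4 := keyb t (hIooIcc ht) (t + 0) ht0 (t + m) htm
      rw [slope_def_field, sub_zero, abs_div]
      rw [div_le_iff₀ (abs_pos.2 (mem_compl_singleton_iff.1 hm0))]
      calc |f (X (t + m)) t - f (X (t + 0)) t| ≤ C * |t + m - (t + 0)| := h4
        _ = C * |m| := by ring_nf
    have habs : Tendsto (fun m => |slope (fun m : ℝ => f (X (t + m)) t) 0 m|)
        (nhdsWithin (0:ℝ) ({(0:ℝ)}ᶜ : Set ℝ)) (nhds |F' t|) :=
      hslope.abs
    exact le_of_tendsto habs hev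
  -- measurability / integrability of F' on (0,1)
  -- a countable cover of (0,1) by closed-from-above interval pieces
  set c : ℕ → ℝ := fun k => 1/(k+2) with hcdef
  have hc_pos : ∀ k : ℕ, 0 < c k := fun k => by
    rw [hcdef]; positivity
  have hc_half : ∀ k : ℕ, c k ≤ 1/2 := by
    intro k
    rw [hcdef]
    apply one_div_le_one_div_of_le
    · norm_num
    · push_cast; linarith [(Nat.cast_nonneg k : (0:ℝ) ≤ k)]
  have hcover : Ioo (0:ℝ) 1 = ⋃ k : ℕ, uIoc (c k) (1 - c k) := by
    apply Subset.antisymm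
    · intro x hx
      obtain ⟨k₁, hk₁⟩ := exists_nat_one_div_lt hx.1
      obtain ⟨k₂, hk₂⟩ := exists_nat_one_div_lt (by linarith [hx.2] : (0:ℝ) < 1 - x)
      refine mem_iUnion.2 ⟨k₁ + k₂, ?_⟩
      have e1 : c (k₁ + k₂) ≤ 1/(k₁+1) := by
        rw [hcdef]
        apply one_div_le_one_div_of_le
        · positivity
        · push_cast; linarith [(Nat.cast_nonneg k₂ : (0:ℝ) ≤ k₂)]
      have e2 : c (k₁ + k₂) ≤ 1/(k₂+1) := by
        rw [hcdef]
        apply one_div_le_one_div_of_le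
        · positivity
        · push_cast; linarith [(Nat.cast_nonneg k₁ : (0:ℝ) ≤ k₁)]
      have e3 : c (k₁ + k₂) < x := lt_of_le_of_lt e1 hk₁
      have e4 : x < 1 - c (k₁ + k₂) := by
        have := lt_of_le_of_lt e2 hk₂
        linarith
      rw [uIoc_of_le (by linarith [hc_half (k₁ + k₂)] : c (k₁ + k₂) ≤ 1 - c (k₁ + k₂))]
      exact ⟨e3, e4.le⟩
    · apply iUnion_subset
      intro k x hx
      have h1 := hc_pos k
      have h2 := hc_half k
      have hmin : 0 < min (c k) (1 - c k) := lt_min h1 (by linarith)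
      have hmax : max (c k) (1 - c k) < 1 := max_lt (by linarith) (by linarith)
      exact ⟨hmin.trans hx.1, lt_of_le_of_lt hx.2 hmax⟩
  have hF'measIoo : AEStronglyMeasurable F' (volume.restrict (Ioo (0:ℝ) 1)) := by
    rw [hcover, aestronglyMeasurable_iUnion_iff]
    intro k
    have h1 := hc_pos k
    have h2 := hc_half k
    exact measI (c k) (1 - c k) (lt_min h1 (by linarith)) (max_lt (by linarith) (by linarith))
  haveI hfin : IsFiniteMeasure (volume.restrict (Ioo (0:ℝ) 1)) := by
    constructor
    rw [Measure.restrict_apply_univ]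
    rw [Real.volume_Ioo]
    exact ENNReal.ofReal_lt_top
  have hF'int : IntegrableOn F' (Ioo (0:ℝ) 1) volume := by
    apply Integrable.mono' (integrable_const C) hF'measIoo
    filter_upwards [ae_restrict_of_ae hF'bd, ae_restrict_mem measurableSet_Ioo] with s h1 h2
    simpa [Real.norm_eq_abs] using h1 h2
  set g : ℝ → ℝ := (Ioo (0:ℝ) 1).indicator F' with hgdef
  have hgint : Integrable g volume := (integrable_indicator_iff measurableSet_Ioo).2 hF'int
  have hleb := IsUnifLocDoublingMeasure.ae_tendsto_average (μ := (volume : Measure ℝ))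
    hgint.locallyIntegrable 1
  constructor
  · -- outer FOC implies a.e. FOC
    intro houter
    have hint0 : ∀ r ∈ Ioo (0:ℝ) 1, ∀ t ∈ Ioo (0:ℝ) 1, (∫ s in r..t, F' s) = 0 :=
      fun r hr t ht => (master r hr t ht).unique (houter r hr t ht)
    have hzero : ∀ᵐ x ∂(volume : Measure ℝ), x ∈ Ioo (0:ℝ) 1 → F' x = 0 := by
      filter_upwards [hleb] with x hx hxI
      set ε := min x (1 - x) with hεdef
      have hεpos : 0 < ε := lt_min hxI.1 (by linarith [hxI.2])
      have htend : Tendsto (fun d : ℝ => ⨍ y in Metric.closedBall x d, g y)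
          (nhdsWithin (0:ℝ) (Ioi 0)) (nhds (g x)) := by
        refine hx (fun _ => x) id tendsto_id ?_
        filter_upwards [self_mem_nhdsWithin] with d hd
        exact Metric.mem_closedBall_self (by simpa using le_of_lt hd)
      have hev : (fun d : ℝ => ⨍ y in Metric.closedBall x d, g y)
          =ᶠ[nhdsWithin (0:ℝ) (Ioi 0)] fun _ => (0:ℝ) := by
        filter_upwards [Ioo_mem_nhdsGT_of_mem ⟨le_refl (0:ℝ), hεpos⟩] with d hd
        have hd0 : 0 < d := hd.1
        have hdε : d < ε := hd.2
        have h2x : ε ≤ x := min_le_left _ _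
        have h2x' : ε ≤ 1 - x := min_le_right _ _
        have hsub2 : Icc (x - d) (x + d) ⊆ Ioo (0:ℝ) 1 := by
          intro y hy
          exact ⟨by linarith [hy.1], by linarith [hy.2]⟩
        have h1 : (∫ y in Metric.closedBall x d, g y) = ∫ s in (x-d)..(x+d), F' s := by
          rw [Real.closedBall_eq_Icc, hgdef]
          rw [setIntegral_indicator measurableSet_Ioo]
          rw [inter_eq_left.2 hsub2]
          rw [integral_Icc_eq_integral_Ioc,
            ← intervalIntegral.integral_of_le (by linarith : x - d ≤ x + d)]
        have h3 : (∫ s in (x-d)..(x+d), F' s) = 0 :=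
          hint0 _ ⟨by linarith, by linarith⟩ _ ⟨by linarith, by linarith⟩
        show (⨍ y in Metric.closedBall x d, g y) = 0
        rw [setAverage_eq, h1, h3, smul_zero]
      have hgx := tendsto_nhds_unique (htend.congr' hev) tendsto_const_nhds
      rw [hgdef, indicator_of_mem hxI] at hgx
      exact hgx
    rw [ae_restrict_iff' measurableSet_Ioo]
    filter_upwards [hD, hzero] with t h1 h2 ht
    have h3 := h1 ht
    rw [h2 ht] at h3
    exact h3
  · -- a.e. FOC implies outer FOC
    intro hae r hr t ht
    have hz' : ∀ᵐ s ∂(volume.restrict (Ioo (0:ℝ) 1)), F' s = 0 := by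
      filter_upwards [hae, ae_restrict_of_ae hD, ae_restrict_mem measurableSet_Ioo]
        with s h1 h2 h3
      exact (h2 h3).unique h1
    have hz := (ae_restrict_iff' measurableSet_Ioo).1 hz'
    have hIsub : uIoc r t ⊆ Ioo (0:ℝ) 1 := fun s hs =>
      ⟨(lt_min hr.1 ht.1).trans hs.1, lt_of_le_of_lt hs.2 (max_lt hr.2 ht.2)⟩
    have hzero_int : (∫ s in r..t, F' s) = 0 := by
      have hcongr : ∀ᵐ s ∂(volume : Measure ℝ), s ∈ uIoc r t → F' s = (fun _ => (0:ℝ)) s := by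
        filter_upwards [hz] with s h hs
        exact h (hIsub hs)
      rw [intervalIntegral.integral_congr_ae hcongr]
      simp
    have hm := master r hr t ht
    rwa [hzero_int] at hm
end

section
/- Implementability theorem: If the partially ordered outcome set 𝒴 is regular, the payoff f is regular, and f satisfies the outer Spence–Mirrlees condition, then every increasing allocation Y : [0,1] → 𝒴 is implementable. -/
open MeasureTheory Set Filter intervalIntegral

/-- The order topology on a partially ordered set: generated by the open order rays
`{y' | y' < y}` and `{y' | y < y'}`. -/
def orderRayTopology (Y : Type*) [PartialOrder Y] : TopologicalSpace Y :=
  TopologicalSpace.generateFrom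
    ({S : Set Y | ∃ y : Y, S = {y' | y' < y}} ∪ {S : Set Y | ∃ y : Y, S = {y' | y < y'}})

/-- The outcome space `𝒴` is *regular*: order-dense-in-itself, countably chain-complete, and
chain-separable. -/
def OutcomeRegular (Y : Type*) [PartialOrder Y] : Prop :=
  (∀ a a' : Y, a < a' → ∃ b : Y, a < b ∧ b < a') ∧
  (∀ C : Set Y, IsChain (· ≤ ·) C → C.Countable → C.Nonempty →
    (BddBelow C → ∃ i : Y, IsGLB C i) ∧ (BddAbove C → ∃ s : Y, IsLUB C s)) ∧
  (∀ C : Set Y, IsChain (· ≤ ·) C → ∃ B : Set Y, B.Countable ∧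
    ∀ c ∈ C, ∀ c' ∈ C, c < c' → ∃ b ∈ B, c ≤ b ∧ b ≤ c')

/-- The payoff `f` is *regular*: the type derivative `f₃` exists (as a derivative on `[0,1]`)
and is bounded, `p ↦ f₃ y p t` is continuous, and `f` is jointly continuous on `C × ℝ × [0,1]`
for every chain `C ⊆ 𝒴`, where `C` carries the relative topology inherited from the order
topology on `𝒴`. -/
def PayoffRegular {Y : Type*} [PartialOrder Y] (f f₃ : Y → ℝ → ℝ → ℝ) : Prop :=
  (∀ (y : Y) (p : ℝ), ∀ t ∈ Icc (0:ℝ) 1,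
      HasDerivWithinAt (fun τ => f y p τ) (f₃ y p t) (Icc (0:ℝ) 1) t) ∧
  (∃ K : ℝ, ∀ (y : Y) (p : ℝ), ∀ t ∈ Icc (0:ℝ) 1, |f₃ y p t| ≤ K) ∧
  (∀ (y : Y), ∀ t ∈ Icc (0:ℝ) 1, Continuous fun p => f₃ y p t) ∧
  (∀ C : Set Y, IsChain (· ≤ ·) C →
    letI : TopologicalSpace Y := orderRayTopology Y
    ContinuousOn (fun q : Y × ℝ × ℝ => f q.1 q.2.1 q.2.2) (C ×ˢ (univ : Set ℝ) ×ˢ Icc (0:ℝ) 1))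

/-- `φ` is single-crossing on `S`. -/
def SingleCrossingOn (φ : ℝ → ℝ) (S : Set ℝ) : Prop :=
  ∀ n ∈ S, ∀ n' ∈ S, n < n' → (0 ≤ φ n → 0 ≤ φ n') ∧ (0 < φ n → 0 < φ n')

/-- The marginal mimicking gain: `m ↦ (1/m)(∫_r^t f(Y(s+m),P(s+m),s+n) ds −
∫_r^t f(Y(s),P(s),s+n) ds)`. -/
noncomputable def mimickGain {Y : Type*} (f : Y → ℝ → ℝ → ℝ) (Ya : ℝ → Y) (P : ℝ → ℝ)
    (r t n : ℝ) : ℝ → ℝ := fun m =>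
  ((∫ s in r..t, f (Ya (s + m)) (P (s + m)) (s + n)) -
    ∫ s in r..t, f (Ya s) (P s) (s + n)) / m

/-- The *outer Spence–Mirrlees condition*: for every increasing allocation `Ya`, every payment
schedule `P` and all `r < t` in `(0,1)`, the map
`n ↦ limsup_{m→0}` of the marginal mimicking gain is single-crossing in `n`. -/
def OuterSpenceMirrlees {Y : Type*} [PartialOrder Y] (f : Y → ℝ → ℝ → ℝ) : Prop :=
  ∀ Ya : ℝ → Y, MonotoneOn Ya (Icc (0:ℝ) 1) → ∀ P : ℝ → ℝ,
    ∀ r ∈ Ioo (0:ℝ) 1, ∀ t ∈ Ioo (0:ℝ) 1, r < t →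
      SingleCrossingOn
        (fun n => limsup (mimickGain f Ya P r t n) (nhdsWithin 0 {(0:ℝ)}ᶜ))
        (Icc (-r) (1 - t))

/-- `(Y,P)` is incentive-compatible, i.e. `P` implements the allocation `Y`. -/
def Implementable {Y : Type*} (f : Y → ℝ → ℝ → ℝ) (Ya : ℝ → Y) : Prop :=
  ∃ P : ℝ → ℝ, ∀ r ∈ Icc (0:ℝ) 1, ∀ t ∈ Icc (0:ℝ) 1,
    f (Ya r) (P r) t ≤ f (Ya t) (P t) t


open scoped Topology

section ImplementabilityProof

variable {Y : Type*} [PartialOrder Y]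

noncomputable def piv (f : Y → ℝ → ℝ → ℝ) (y : Y) (v t : ℝ) : ℝ :=
  haveI := Classical.propDecidable (∃ p, f y p t = v)
  if h : ∃ p, f y p t = v then h.choose else 0

lemma piv_spec {f : Y → ℝ → ℝ → ℝ} {y : Y} {t : ℝ}
    (hsurj : Function.Surjective fun p => f y p t) (v : ℝ) :
    f y (piv f y v t) t = v := by
  classical
  have h : ∃ p, f y p t = v := hsurj v
  rw [piv]
  rw [dif_pos h]
  exact h.choose_spec

lemma continuous_of_strictAnti_surjective {g : ℝ → ℝ} (h1 : StrictAnti g)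
    (h2 : Function.Surjective g) : Continuous g := by
  have hm : StrictMono fun p : ℝ => g (-p) := fun a b hab => h1 (neg_lt_neg hab)
  have hs : Function.Surjective fun p : ℝ => g (-p) := by
    intro v; obtain ⟨p, hp⟩ := h2 v; exact ⟨-p, by simpa using hp⟩
  have hc : Continuous fun p : ℝ => g (-p) := by
    have := (StrictMono.orderIsoOfSurjective _ hm hs).continuous
    simpa using this
  have : Continuous fun p : ℝ => g (-(-p)) := hc.comp continuous_neg
  simpa using this

noncomputable def Phi (f : Y → ℝ → ℝ → ℝ) (Ya : ℝ → Y) (a v b : ℝ) : ℝ :=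
  f (Ya a) (piv f (Ya a) v a) b

inductive Ach (f : Y → ℝ → ℝ → ℝ) (Ya : ℝ → Y) : ℝ → ℝ → Prop
  | base : Ach f Ya 0 0
  | step {a v : ℝ} (b : ℝ) : Ach f Ya a v → a ≤ b → b ≤ 1 → Ach f Ya b (Phi f Ya a v b)

theorem main_assembly
    (f : Y → ℝ → ℝ → ℝ) (K : ℝ)
    (henv : ∀ (y : Y), ∀ t ∈ Icc (0:ℝ) 1,
      StrictAnti (fun p => f y p t) ∧ Function.Surjective (fun p => f y p t))
    (hcont : ∀ (y : Y) (p : ℝ), ContinuousOn (fun τ => f y p τ) (Icc (0:ℝ) 1))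
    (hLip : ∀ (y : Y) (p : ℝ), ∀ a ∈ Icc (0:ℝ) 1, ∀ b ∈ Icc (0:ℝ) 1,
      |f y p b - f y p a| ≤ K * |b - a|)
    (hK0 : 0 ≤ K)
    (hscd : ∀ {y₀ y₁ : Y}, y₀ ≤ y₁ → ∀ p₀ p₁ : ℝ,
      ∀ τ ∈ Icc (0:ℝ) 1, ∀ c ∈ Icc (0:ℝ) 1, τ < c →
      0 < f y₁ p₁ τ - f y₀ p₀ τ → 0 < f y₁ p₁ c - f y₀ p₀ c)
    (Ya : ℝ → Y) (hYa : MonotoneOn Ya (Icc (0:ℝ) 1)) :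
    ∃ P : ℝ → ℝ, ∀ r ∈ Icc (0:ℝ) 1, ∀ t ∈ Icc (0:ℝ) 1,
      f (Ya r) (P r) t ≤ f (Ya t) (P t) t := by
  classical
  -- basic facts about piv
  have hpiv : ∀ (y : Y), ∀ t ∈ Icc (0:ℝ) 1, ∀ v, f y (piv f y v t) t = v :=
    fun y t ht v => piv_spec (henv y t ht).2 v
  have hpivanti : ∀ (y : Y), ∀ t ∈ Icc (0:ℝ) 1, StrictAnti (fun v => piv f y v t) := by
    intro y t ht v v' hvv'
    by_contra hcon
    push_neg at hcon
    have := ((henv y t ht).1.antitone) hcon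
    simp only [] at this
    rw [hpiv y t ht v, hpiv y t ht v'] at this
    exact absurd hvv' (not_lt.mpr this)
  have hpivsurj : ∀ (y : Y), ∀ t ∈ Icc (0:ℝ) 1, Function.Surjective (fun v => piv f y v t) := by
    intro y t ht p
    refine ⟨f y p t, ?_⟩
    exact (henv y t ht).1.injective (by rw [hpiv y t ht])
  have hpivcont : ∀ (y : Y), ∀ t ∈ Icc (0:ℝ) 1, Continuous (fun v => piv f y v t) :=
    fun y t ht => continuous_of_strictAnti_surjective (hpivanti y t ht) (hpivsurj y t ht)
  have hfpcont : ∀ (y : Y), ∀ t ∈ Icc (0:ℝ) 1, Continuous (fun p => f y p t) :=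
    fun y t ht => continuous_of_strictAnti_surjective (henv y t ht).1 (henv y t ht).2
  -- facts about Phi
  have hPhimono : ∀ a ∈ Icc (0:ℝ) 1, ∀ b ∈ Icc (0:ℝ) 1,
      Monotone (fun v => Phi f Ya a v b) := by
    intro a ha b hb v v' hvv'
    rcases eq_or_lt_of_le hvv' with rfl | hlt
    · exact le_refl _
    · have h1 : piv f (Ya a) v' a < piv f (Ya a) v a := hpivanti (Ya a) a ha hlt
      exact le_of_lt ((henv (Ya a) b hb).1 h1)
  have hPhicont : ∀ a ∈ Icc (0:ℝ) 1, ∀ b ∈ Icc (0:ℝ) 1,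
      Continuous (fun v => Phi f Ya a v b) := by
    intro a ha b hb
    exact (hfpcont (Ya a) b hb).comp (hpivcont (Ya a) a ha)
  have hPhidist : ∀ a ∈ Icc (0:ℝ) 1, ∀ b ∈ Icc (0:ℝ) 1, ∀ v,
      |Phi f Ya a v b - v| ≤ K * |b - a| := by
    intro a ha b hb v
    have h1 : v = f (Ya a) (piv f (Ya a) v a) a := (hpiv (Ya a) a ha v).symm
    calc |Phi f Ya a v b - v| = |f (Ya a) (piv f (Ya a) v a) b - f (Ya a) (piv f (Ya a) v a) a| := by
          rw [Phi]; congr 1; rw [← h1]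
      _ ≤ K * |b - a| := hLip (Ya a) _ a ha b hb
  -- invariant of achievability
  have hAchInv : ∀ {t v}, Ach f Ya t v → 0 ≤ t ∧ t ≤ 1 ∧ |v| ≤ K * t := by
    intro t v h
    induction h with
    | base => refine ⟨le_refl _, zero_le_one, by simp⟩
    | @step a v b h hab hb1 ih =>
      obtain ⟨ha0, ha1, hv⟩ := ih
      have hb0 : 0 ≤ b := le_trans ha0 hab
      refine ⟨hb0, hb1, ?_⟩
      have h2 := hPhidist a ⟨ha0, ha1⟩ b ⟨hb0, hb1⟩ v
      rw [abs_of_nonneg (by linarith : (0:ℝ) ≤ b - a)] at h2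
      calc |Phi f Ya a v b| ≤ |v| + |Phi f Ya a v b - v| := by
            have := abs_add_le v (Phi f Ya a v b - v)
            simpa using this
        _ ≤ K * a + K * (b - a) := add_le_add hv h2
        _ = K * b := by ring
  -- the value function
  set S : ℝ → Set ℝ := fun t => {v | Ach f Ya t v} with hS
  have hne : ∀ t ∈ Icc (0:ℝ) 1, (S t).Nonempty := by
    intro t ht
    exact ⟨Phi f Ya 0 0 t, Ach.step t Ach.base ht.1 ht.2⟩
  have hbdd : ∀ t, BddAbove (S t) := by
    intro t
    refine ⟨K, fun v hv => ?_⟩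
    obtain ⟨h0, h1, hb⟩ := hAchInv hv
    calc v ≤ |v| := le_abs_self v
      _ ≤ K * t := hb
      _ ≤ K * 1 := by nlinarith
      _ = K := mul_one K
  set u : ℝ → ℝ := fun t => sSup (S t) with hu
  have hmemle : ∀ {t v}, Ach f Ya t v → v ≤ u t := fun {t v} h => le_csSup (hbdd t) h
  have hu0 : 0 ≤ u 0 := hmemle Ach.base
  -- upward closure
  have hUP : ∀ a ∈ Icc (0:ℝ) 1, ∀ b ∈ Icc (0:ℝ) 1, a ≤ b → Phi f Ya a (u a) b ≤ u b := by
    intro a ha b hb hab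
    obtain ⟨v, _, hvtend, hvmem⟩ := exists_seq_tendsto_sSup (hne a ha) (hbdd a)
    have h1 : ∀ k, Phi f Ya a (v k) b ≤ u b :=
      fun k => hmemle (Ach.step b (hvmem k) hab hb.2)
    have h2 : Tendsto (fun k => Phi f Ya a (v k) b) atTop (𝓝 (Phi f Ya a (u a) b)) :=
      ((hPhicont a ha b hb).tendsto _).comp hvtend
    exact le_of_tendsto h2 (Eventually.of_forall h1)
  -- downward property by chain induction
  have hDOWN : ∀ {b w}, Ach f Ya b w → ∀ τ, 0 ≤ τ → τ ≤ b →
      f (Ya b) (piv f (Ya b) w b) τ ≤ u τ := by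
    intro b w h
    induction h with
    | base =>
      intro τ h0 h1
      have hτ : τ = 0 := le_antisymm h1 h0
      subst hτ
      rw [hpiv (Ya 0) 0 ⟨le_refl _, zero_le_one⟩ 0]
      exact hu0
    | @step a v b h hab hb1 ih =>
      intro τ hτ0 hτb
      obtain ⟨ha0, ha1, _⟩ := hAchInv h
      have hb0 : 0 ≤ b := le_trans ha0 hab
      have hbI : b ∈ Icc (0:ℝ) 1 := ⟨hb0, hb1⟩
      have haI : a ∈ Icc (0:ℝ) 1 := ⟨ha0, ha1⟩
      set w := Phi f Ya a v b with hw
      set pa := piv f (Ya a) v a with hpa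
      set pb := piv f (Ya b) w b with hpb
      have heq : f (Ya b) pb b = f (Ya a) pa b := by
        rw [hpb, hpiv (Ya b) b hbI w, hw]; rfl
      have hkey : f (Ya b) pb τ ≤ f (Ya a) pa τ := by
        rcases eq_or_lt_of_le hτb with rfl | hlt
        · rw [heq]
        · by_contra hgt
          push_neg at hgt
          have hyy : Ya a ≤ Ya b := hYa haI hbI hab
          have h2 := hscd hyy pa pb τ ⟨hτ0, le_trans hlt.le hb1⟩ b hbI hlt (by linarith)
          rw [heq] at h2
          simp at h2
      have h3 : f (Ya a) pa τ ≤ u τ := by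
        rcases le_or_gt τ a with hτa | haτ
        · exact ih τ hτ0 hτa
        · have hτI : τ ∈ Icc (0:ℝ) 1 := ⟨hτ0, le_trans hτb hb1⟩
          have hPa : f (Ya a) pa τ = Phi f Ya a v τ := rfl
          rw [hPa]
          calc Phi f Ya a v τ ≤ Phi f Ya a (u a) τ := hPhimono a haI τ hτI (hmemle h)
            _ ≤ u τ := hUP a haI τ hτI haτ.le
      exact le_trans hkey h3
  -- final assembly
  refine ⟨fun t => piv f (Ya t) (u t) t, ?_⟩
  intro r hr t ht
  have hdiag : f (Ya t) (piv f (Ya t) (u t) t) t = u t := hpiv (Ya t) t ht (u t)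
  rw [hdiag]
  rcases le_or_gt r t with hrt | htr
  · exact hUP r hr t ht hrt
  · obtain ⟨v, _, hvtend, hvmem⟩ := exists_seq_tendsto_sSup (hne r hr) (hbdd r)
    have h1 : ∀ k, f (Ya r) (piv f (Ya r) (v k) r) t ≤ u t :=
      fun k => hDOWN (hvmem k) t ht.1 htr.le
    have hc : Continuous (fun w => f (Ya r) (piv f (Ya r) w r) t) :=
      (hfpcont (Ya r) t ht).comp (hpivcont (Ya r) r hr)
    have h2 : Tendsto (fun k => f (Ya r) (piv f (Ya r) (v k) r) t) atTop
        (𝓝 (f (Ya r) (piv f (Ya r) (u r) r) t)) := (hc.tendsto _).comp hvtend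
    exact le_of_tendsto h2 (Eventually.of_forall h1)

/-- Single-crossing differences, derived from the outer Spence–Mirrlees condition via
two-valued step allocations. -/
lemma scd_of_osm (f : Y → ℝ → ℝ → ℝ)
    (hcont : ∀ (y : Y) (p : ℝ), ContinuousOn (fun τ => f y p τ) (Icc (0:ℝ) 1))
    (hSM : OuterSpenceMirrlees f)
    {y₀ y₁ : Y} (hy : y₀ ≤ y₁) (p₀ p₁ : ℝ) :
    ∀ τ ∈ Icc (0:ℝ) 1, ∀ c ∈ Icc (0:ℝ) 1, τ < c →
      0 < f y₁ p₁ τ - f y₀ p₀ τ → 0 < f y₁ p₁ c - f y₀ p₀ c := by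
  set D : ℝ → ℝ := fun x => f y₁ p₁ x - f y₀ p₀ x with hDdef
  have hD : ContinuousOn D (Icc (0:ℝ) 1) := (hcont y₁ p₁).sub (hcont y₀ p₀)
  obtain ⟨M₀, hM₀⟩ : ∃ M, ∀ x ∈ Icc (0:ℝ) 1, |D x| ≤ M := by
    obtain ⟨M, hM⟩ := isCompact_Icc.exists_bound_of_continuousOn hD
    exact ⟨M, fun x hx => by simpa using hM x hx⟩
  have hM₀0 : 0 ≤ M₀ := le_trans (abs_nonneg _) (hM₀ 0 ⟨le_refl _, zero_le_one⟩)
  -- the window lemma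
  have win : ∀ T R : ℝ, 0 < R → R < T → T < 1 →
      ∀ n n' : ℝ, n ∈ Icc (-R) (1-T) → n' ∈ Icc (-R) (1-T) → n < n' →
      0 < D (T+n) → 0 < D (T+n') := by
    intro T R hR hRT hT1 n n' hn hn' hnn' hpos
    have hT0 : (0:ℝ) < T := hR.trans hRT
    classical
    set Ya' : ℝ → Y := fun s => if s < T then y₀ else y₁ with hYa'
    set P' : ℝ → ℝ := fun s => if s < T then p₀ else p₁ with hP'
    have hmono : MonotoneOn Ya' (Icc (0:ℝ) 1) := by
      intro a _ b _ hab
      by_cases hb : b < T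
      · have ha : a < T := lt_of_le_of_lt hab hb
        simp [hYa', ha, hb]
      · by_cases ha : a < T
        · simpa [hYa', ha, hb] using hy
        · simp [hYa', ha, hb]
    have hSC := hSM Ya' hmono P' R ⟨hR, hRT.trans hT1⟩ T ⟨hT0, hT1⟩ hRT
    set mg : ℝ → ℝ → ℝ := fun ν => mimickGain f Ya' P' R T ν with hmg
    -- a.e. avoidance of the single jump point
    have hae : ∀ᵐ s : ℝ, s ≠ T := by
      have h1 : (volume : Measure ℝ) {T} = 0 := measure_singleton T
      rw [ae_iff]; convert h1 using 2; ext s; simp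
    -- integrand identities
    have hF0 : ∀ (ν s : ℝ), s < T → f (Ya' s) (P' s) (s+ν) = f y₀ p₀ (s+ν) := by
      intro ν s hs; simp [hYa', hP', hs]
    have hF1 : ∀ (ν m s : ℝ), f (Ya' (s+m)) (P' (s+m)) (s+ν) =
        if s < T - m then f y₀ p₀ (s+ν) else f y₁ p₁ (s+ν) := by
      intro ν m s
      by_cases h : s + m < T
      · rw [if_pos (by linarith)]; simp [hYa', hP', h]
      · rw [if_neg (by intro hh; exact h (by linarith))]; simp [hYa', hP', h]
    -- continuity of shifted integrands on [R, T]
    have hmaps : ∀ ν ∈ Icc (-R) (1-T), MapsTo (fun s : ℝ => s + ν) (Icc R T) (Icc (0:ℝ) 1) := by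
      intro ν hν s hs
      simp only [mem_Icc]
      exact ⟨by have := hν.1; have := hs.1; linarith, by have := hν.2; have := hs.2; linarith⟩
    have hg₀ : ∀ ν ∈ Icc (-R) (1-T),
        ContinuousOn (fun s : ℝ => f y₀ p₀ (s+ν)) (Icc R T) := by
      intro ν hν
      exact (hcont y₀ p₀).comp (by fun_prop) (hmaps ν hν)
    have hg₁ : ∀ ν ∈ Icc (-R) (1-T),
        ContinuousOn (fun s : ℝ => f y₁ p₁ (s+ν)) (Icc R T) := by
      intro ν hν
      exact (hcont y₁ p₁).comp (by fun_prop) (hmaps ν hν)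
    have hDν : ∀ ν ∈ Icc (-R) (1-T),
        ContinuousOn (fun s : ℝ => D (s+ν)) (Icc R T) := by
      intro ν hν
      exact ((hg₁ ν hν).sub (hg₀ ν hν))
    -- (Z) : for m < 0 the gain vanishes
    have hZ : ∀ (ν m : ℝ), m < 0 → mg ν m = 0 := by
      intro ν m hm
      have : (∫ s in R..T, f (Ya' (s + m)) (P' (s + m)) (s + ν)) =
          ∫ s in R..T, f (Ya' s) (P' s) (s + ν) := by
        apply intervalIntegral.integral_congr_ae
        filter_upwards [hae] with s hsne hsmem
        rw [uIoc_of_le hRT.le] at hsmem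
        have hsltT : s < T := lt_of_le_of_ne hsmem.2 hsne
        have h1 : s + m < T := by linarith
        rw [hF1 ν m s, if_pos (by linarith), hF0 ν s hsltT]
      simp [hmg, mimickGain, this]
    -- (F) : formula for small positive m
    have hFm : ∀ ν ∈ Icc (-R) (1-T), ∀ m : ℝ, 0 < m → m < T - R →
        mg ν m = (∫ s in (T-m)..T, D (s+ν)) / m := by
      intro ν hν m hm hmTR
      have hRTm : R < T - m := by linarith
      have hg₀i : IntervalIntegrable (fun s : ℝ => f y₀ p₀ (s+ν)) volume R T := by
        apply ContinuousOn.intervalIntegrable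
        rw [uIcc_of_le hRT.le]; exact hg₀ ν hν
      have hDi : IntegrableOn (fun s : ℝ => D (s+ν)) (Ioc R T) volume :=
        ((hDν ν hν).integrableOn_Icc).mono_set Ioc_subset_Icc_self
      have hI₂ : (∫ s in R..T, f (Ya' s) (P' s) (s + ν)) = ∫ s in R..T, f y₀ p₀ (s+ν) := by
        apply intervalIntegral.integral_congr_ae
        filter_upwards [hae] with s hsne hsmem
        rw [uIoc_of_le hRT.le] at hsmem
        exact hF0 ν s (lt_of_le_of_ne hsmem.2 hsne)
      set ind : ℝ → ℝ := indicator (Ico (T-m) T) (fun s => D (s+ν)) with hind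
      have hIcoIcc : Ico (T-m) T ⊆ Icc R T := fun x hx => ⟨by have := hx.1; linarith, hx.2.le⟩
      have hDIco : IntegrableOn (fun s : ℝ => D (s+ν)) (Ico (T-m) T) volume :=
        ((hDν ν hν).integrableOn_Icc).mono_set hIcoIcc
      have hindint : IntervalIntegrable ind volume R T := by
        rw [hind, intervalIntegrable_iff, uIoc_of_le hRT.le]
        have h2 : Integrable (fun s : ℝ => D (s+ν))
            ((volume.restrict (Ioc R T)).restrict (Ico (T-m) T)) := by
          rw [Measure.restrict_restrict measurableSet_Ico]
          exact hDIco.mono_set inter_subset_left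
        exact (integrable_indicator_iff measurableSet_Ico).mpr h2
      have hptwise : ∀ᵐ s : ℝ, s ∈ Set.uIoc R T →
          f (Ya' (s+m)) (P' (s+m)) (s+ν) = f y₀ p₀ (s+ν) + ind s := by
        filter_upwards [hae] with s hsne hsmem
        rw [uIoc_of_le hRT.le] at hsmem
        have hsltT : s < T := lt_of_le_of_ne hsmem.2 hsne
        rw [hF1 ν m s]
        by_cases hcase : s < T - m
        · rw [if_pos hcase, hind,
            indicator_of_notMem (fun h => absurd (mem_Ico.mp h).1 (not_le.mpr hcase))]
          ring
        · rw [if_neg hcase, hind, indicator_of_mem (mem_Ico.mpr ⟨not_lt.mp hcase, hsltT⟩)]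
          simp only [hDdef]
          ring
      have hI₁ : (∫ s in R..T, f (Ya' (s+m)) (P' (s+m)) (s + ν)) =
          (∫ s in R..T, f y₀ p₀ (s+ν)) + ∫ s in R..T, ind s := by
        rw [← intervalIntegral.integral_add hg₀i hindint]
        exact intervalIntegral.integral_congr_ae hptwise
      have hindval : (∫ s in R..T, ind s) = ∫ s in (T-m)..T, D (s+ν) := by
        rw [intervalIntegral.integral_of_le hRT.le,
          intervalIntegral.integral_of_le (by linarith : T-m ≤ T)]
        rw [hind, setIntegral_indicator measurableSet_Ico]
        have hseteq : Ioc R T ∩ Ico (T-m) T = Ico (T-m) T := by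
          rw [inter_eq_right]
          exact fun x hx => ⟨lt_of_lt_of_le hRTm hx.1, hx.2.le⟩
        rw [hseteq, integral_Ico_eq_integral_Ioo, ← integral_Ioc_eq_integral_Ioo]
      simp only [hmg, mimickGain]
      rw [hI₁, hI₂, hindval]
      congr 1
      ring
    -- (CE) : right limit
    have hCE : ∀ ν ∈ Icc (-R) (1-T), ∀ ε : ℝ, 0 < ε →
        ∀ᶠ m in 𝓝[>] (0:ℝ), |mg ν m - D (T+ν)| ≤ ε := by
      intro ν hν ε hε
      have hTν : T + ν ∈ Icc (0:ℝ) 1 := ⟨by have := hν.1; linarith, by have := hν.2; linarith⟩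
      have hDc : ContinuousWithinAt D (Icc (0:ℝ) 1) (T+ν) := hD (T+ν) hTν
      rw [Metric.continuousWithinAt_iff] at hDc
      obtain ⟨δ, hδ, hδε⟩ := hDc ε hε
      have hmem : Ioo (0:ℝ) (min δ (T-R)) ∈ 𝓝[>] (0:ℝ) :=
        Ioo_mem_nhdsGT_of_mem ⟨le_refl _, lt_min hδ (by linarith)⟩
      filter_upwards [hmem] with m hm
      obtain ⟨hm0, hmlt⟩ := hm
      have hmδ : m < δ := lt_of_lt_of_le hmlt (min_le_left _ _)
      have hmTR : m < T - R := lt_of_lt_of_le hmlt (min_le_right _ _)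
      rw [hFm ν hν m hm0 hmTR]
      have hint : IntervalIntegrable (fun s : ℝ => D (s+ν)) volume (T-m) T := by
        apply ContinuousOn.intervalIntegrable
        rw [uIcc_of_le (by linarith : T-m ≤ T)]
        exact (hDν ν hν).mono (fun x hx => ⟨by have := hx.1; linarith, hx.2⟩)
      have hsub : (∫ s in (T-m)..T, D (s+ν)) - m * D (T+ν) =
          ∫ s in (T-m)..T, (D (s+ν) - D (T+ν)) := by
        rw [intervalIntegral.integral_sub hint intervalIntegrable_const,
          intervalIntegral.integral_const]
        have : T - (T - m) = m := by ring
        rw [this, smul_eq_mul]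
      have hbnd : ‖∫ s in (T-m)..T, (D (s+ν) - D (T+ν))‖ ≤ ε * |T - (T-m)| := by
        apply intervalIntegral.norm_integral_le_of_norm_le_const
        intro x hx
        rw [Real.norm_eq_abs]
        rw [uIoc_of_le (by linarith : T-m ≤ T)] at hx
        have hx1 : x + ν ∈ Icc (0:ℝ) 1 := by
          constructor
          · have := hx.1; have := hν.1; linarith
          · have := hx.2; have := hν.2; linarith
        have hdist : dist (x + ν) (T + ν) < δ := by
          rw [Real.dist_eq]
          have : |x + ν - (T + ν)| = |x - T| := by congr 1; ring
          rw [this, abs_of_nonpos (by have := hx.2; linarith)]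
          have := hx.1; linarith
        have := hδε hx1 hdist
        rw [Real.dist_eq] at this
        exact le_of_lt this
      have hTm : |T - (T-m)| = m := by
        rw [abs_of_nonneg (by linarith)]; ring
      rw [hTm, Real.norm_eq_abs] at hbnd
      have heq : (∫ s in (T-m)..T, D (s+ν)) / m - D (T+ν) =
          (∫ s in (T-m)..T, (D (s+ν) - D (T+ν))) / m := by
        rw [← hsub]; field_simp
      rw [heq, abs_div, abs_of_pos hm0, div_le_iff₀ hm0]
      exact hbnd
    -- eventual bound near 0
    have hBnd : ∀ ν ∈ Icc (-R) (1-T), ∀ᶠ m in 𝓝[≠] (0:ℝ), |mg ν m| ≤ M₀ := by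
      intro ν hν
      have hmem : Metric.ball (0:ℝ) (T-R) ∩ {(0:ℝ)}ᶜ ∈ 𝓝[≠] (0:ℝ) :=
        inter_mem (mem_nhdsWithin_of_mem_nhds (Metric.ball_mem_nhds 0 (by linarith)))
          self_mem_nhdsWithin
      filter_upwards [hmem] with m hm
      obtain ⟨hball, hne⟩ := hm
      have hne0 : m ≠ 0 := hne
      rcases lt_or_gt_of_ne hne0 with hneg | hposm
      · rw [hZ ν m hneg]; simpa using hM₀0
      · have hb : |m| < T - R := by
          simpa [Real.norm_eq_abs] using mem_ball_zero_iff.mp hball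
        have hmTR : m < T - R := lt_of_le_of_lt (le_abs_self m) hb
        rw [hFm ν hν m hposm hmTR]
        have hintb : ‖∫ s in (T-m)..T, D (s+ν)‖ ≤ M₀ * |T - (T-m)| := by
          apply intervalIntegral.norm_integral_le_of_norm_le_const
          intro x hx
          rw [uIoc_of_le (by linarith : T-m ≤ T)] at hx
          rw [Real.norm_eq_abs]
          apply hM₀
          constructor
          · have := hx.1; have := hν.1; linarith
          · have := hx.2; have := hν.2; linarith
        have hTm : |T - (T-m)| = m := by rw [abs_of_nonneg (by linarith)]; ring
        rw [hTm, Real.norm_eq_abs] at hintb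
        rw [abs_div, abs_of_pos hposm, div_le_iff₀ hposm]
        exact hintb
    -- the limsup is positive at n
    set φ : ℝ → ℝ := fun ν => limsup (mg ν) (𝓝[≠] (0:ℝ)) with hφ
    have hA : 0 < φ n := by
      have hfreq : ∃ᶠ m in 𝓝[≠] (0:ℝ), D (T+n) / 2 ≤ mg n m := by
        have hev : ∀ᶠ m in 𝓝[>] (0:ℝ), D (T+n) / 2 ≤ mg n m := by
          filter_upwards [hCE n hn (D (T+n)/2) (half_pos hpos)] with m hm
          have := abs_le.mp hm
          linarith [this.1]
        exact (hev.frequently).filter_mono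
          (nhdsWithin_mono 0 (fun x hx => ne_of_gt hx))
      have hbdd : IsBoundedUnder (· ≤ ·) (𝓝[≠] (0:ℝ)) (mg n) := by
        refine ⟨M₀, ?_⟩
        rw [eventually_map]
        filter_upwards [hBnd n hn] with m hm
        exact le_trans (le_abs_self _) hm
      have := le_limsup_of_frequently_le hfreq hbdd
      have hpos2 : 0 < D (T+n) / 2 := half_pos hpos
      exact lt_of_lt_of_le hpos2 this
    have hA' : 0 < φ n' := (hSC n hn n' hn' hnn').2 hA
    -- conclude positivity of D (T+n')
    by_contra hcon
    push_neg at hcon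
    have hle : ∀ ε : ℝ, 0 < ε → φ n' ≤ ε := by
      intro ε hε
      have hcob : IsCoboundedUnder (· ≤ ·) (𝓝[≠] (0:ℝ)) (mg n') := by
        apply IsBoundedUnder.isCoboundedUnder_le
        refine ⟨-M₀, ?_⟩
        rw [eventually_map]
        filter_upwards [hBnd n' hn'] with m hm
        have := abs_le.mp hm
        linarith [this.1]
      apply limsup_le_of_le hcob
      have hev1 : ∀ᶠ m in 𝓝[>] (0:ℝ), mg n' m ≤ ε := by
        filter_upwards [hCE n' hn' ε hε] with m hm
        have := abs_le.mp hm
        linarith [this.2]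
      have hev2 : ∀ᶠ m in 𝓝[<] (0:ℝ), mg n' m ≤ ε := by
        have : ∀ᶠ m in 𝓝[<] (0:ℝ), m < 0 := eventually_mem_nhdsWithin
        filter_upwards [this] with m hm
        rw [hZ n' m hm]
        linarith
      have hunion : 𝓝[≠] (0:ℝ) = 𝓝[<] (0:ℝ) ⊔ 𝓝[>] (0:ℝ) := by
        rw [← nhdsWithin_union]
        congr 1
        ext x
        simp [lt_or_lt_iff_ne]
      rw [hunion]
      rw [eventually_sup]
      exact ⟨hev2, hev1⟩
    have := hle (φ n' / 2) (by linarith)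
    linarith
  -- assemble: from interior window to the full statement
  intro τ hτ c hc hτc hpos
  -- find an interior point τ₀ ∈ (0, c) with D τ₀ > 0
  obtain ⟨τ₀, hτ₀pos, hτ₀c, hDτ₀⟩ : ∃ τ₀, 0 < τ₀ ∧ τ₀ < c ∧ 0 < D τ₀ := by
    rcases lt_or_eq_of_le hτ.1 with h0τ | h0τ
    · exact ⟨τ, h0τ, hτc, hpos⟩
    · -- τ = 0 : use right continuity
      have hτeq : τ = 0 := h0τ.symm
      subst hτeq
      have hDc0 : ContinuousWithinAt D (Icc (0:ℝ) 1) 0 := hD 0 hτ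
      rw [Metric.continuousWithinAt_iff] at hDc0
      obtain ⟨δ, hδ, hδε⟩ := hDc0 (D 0) hpos
      have hc1 : c ≤ 1 := hc.2
      set τ₀ := min (δ/2) (c/2) with hτ₀
      have hτ₀pos : 0 < τ₀ := lt_min (by linarith) (by linarith)
      have hτ₀c : τ₀ < c := lt_of_le_of_lt (min_le_right _ _) (by linarith)
      have hτ₀mem : τ₀ ∈ Icc (0:ℝ) 1 := ⟨hτ₀pos.le, by linarith⟩
      have hdist : dist τ₀ 0 < δ := by
        rw [Real.dist_eq, sub_zero, abs_of_pos hτ₀pos]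
        exact lt_of_le_of_lt (min_le_left _ _) (by linarith)
      have h5 := hδε hτ₀mem hdist
      rw [Real.dist_eq] at h5
      have h6 := abs_lt.mp h5
      exact ⟨τ₀, hτ₀pos, hτ₀c, by linarith [h6.1]⟩
  -- window with T := τ₀, R := τ₀/2, n := 0, n' := c - τ₀
  have hT1 : τ₀ < 1 := lt_of_lt_of_le hτ₀c hc.2
  have := win τ₀ (τ₀/2) (by linarith) (by linarith) hT1
    0 (c - τ₀)
    ⟨by linarith, by linarith⟩
    ⟨by linarith, by linarith [hc.2]⟩
    (by linarith)
    (by simpa using hDτ₀)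
  have h2 : τ₀ + (c - τ₀) = c := by ring
  rwa [h2] at this

end ImplementabilityProof

/-- **Implementability theorem.** If the partially ordered outcome set `𝒴` is regular, the
payoff `f` (with `p ↦ f y p t` strictly decreasing and onto `ℝ`) is regular, and `f` satisfies
the outer Spence–Mirrlees condition, then every increasing allocation `Y : [0,1] → 𝒴` is
implementable. -/
theorem implementability_theorem
    {Y : Type*} [PartialOrder Y] (f f₃ : Y → ℝ → ℝ → ℝ)
    (henv : ∀ (y : Y), ∀ t ∈ Icc (0:ℝ) 1,
      StrictAnti (fun p => f y p t) ∧ Function.Surjective (fun p => f y p t))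
    (hY : OutcomeRegular Y)
    (hf : PayoffRegular f f₃)
    (hSM : OuterSpenceMirrlees f)
    (Ya : ℝ → Y) (hYa : MonotoneOn Ya (Icc (0:ℝ) 1)) :
    Implementable f Ya := by
  obtain ⟨hd, ⟨K, hK⟩, -, -⟩ := hf
  have hcont : ∀ (y : Y) (p : ℝ), ContinuousOn (fun τ => f y p τ) (Icc (0:ℝ) 1) :=
    fun y p τ hτ => (hd y p τ hτ).continuousWithinAt
  have hK0 : 0 ≤ K := le_trans (abs_nonneg _) (hK (Ya 0) 0 0 ⟨le_refl _, zero_le_one⟩)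
  have hLip : ∀ (y : Y) (p : ℝ), ∀ a ∈ Icc (0:ℝ) 1, ∀ b ∈ Icc (0:ℝ) 1,
      |f y p b - f y p a| ≤ K * |b - a| := by
    intro y p a ha b hb
    have := Convex.norm_image_sub_le_of_norm_hasDerivWithin_le
      (fun x hx => hd y p x hx)
      (fun x hx => by rw [Real.norm_eq_abs]; exact hK y p x hx)
      (convex_Icc (0:ℝ) 1) ha hb
    simpa [Real.norm_eq_abs] using this
  exact main_assembly f K henv hcont hLip hK0
    (fun {y₀ y₁} hy p₀ p₁ => scd_of_osm f hcont hSM hy p₀ p₁) Ya hYa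
end

section
/- Non-decreasing comparative statics: Let 𝒳 and 𝒯 be partially ordered sets and f : 𝒳 × 𝒯 → ℝ. If f has strictly single-crossing differences, then every optimal decision rule X : 𝒯 → 𝒳 is non-decreasing, i.e. there are no t ≤ t' in 𝒯 with X(t') < X(t). -/
/-- **Non-decreasing comparative statics.** Let `𝒳` and `𝒯` be partially ordered sets and
`f : 𝒳 × 𝒯 → ℝ` have strictly single-crossing differences: for any `x < x'` in `𝒳` and
`t < t'` in `𝒯`, `f x' t − f x t ≥ 0` implies `f x' t' − f x t' > 0`. Then every optimal
decision rule `X : 𝒯 → 𝒳` is non-decreasing: there are no `t ≤ t'` in `𝒯` with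
`X t' < X t`. -/
theorem nondecreasing_comparative_statics
    {𝒳 𝒯 : Type*} [PartialOrder 𝒳] [PartialOrder 𝒯] (f : 𝒳 → 𝒯 → ℝ)
    (hscd : ∀ x x' : 𝒳, x < x' → ∀ t t' : 𝒯, t < t' →
      0 ≤ f x' t - f x t → 0 < f x' t' - f x t')
    (X : 𝒯 → 𝒳)
    (hopt : ∀ t : 𝒯, ∀ x : 𝒳, f x t ≤ f (X t) t) :
    ∀ t t' : 𝒯, t ≤ t' → ¬ X t' < X t := by
  intro t t' hle hlt
  rcases hle.lt_or_eq with h | rfl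
  · have h1 : 0 ≤ f (X t) t - f (X t') t := by
      have := hopt t (X t'); linarith
    have h2 := hscd (X t') (X t) hlt t t' h h1
    have := hopt t' (X t)
    linarith
  · exact lt_irrefl _ hlt
end

section
/- If the payoff f is regular and satisfies the (strict) outer Spence–Mirrlees condition, then for any price schedule π : 𝒴 → ℝ, the map (y,t) ↦ f(y,π(y),t) on 𝒴 × [0,1] has (strictly) single-crossing differences: for any y < y' in 𝒴, the map t ↦ f(y',π(y'),t) − f(y,π(y),t) is (strictly) single-crossing. -/
open MeasureTheory Set Filter intervalIntegral

/-- `φ` is strictly single-crossing on `S`. -/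
def StrictSingleCrossingOn (φ : ℝ → ℝ) (S : Set ℝ) : Prop :=
  ∀ n ∈ S, ∀ n' ∈ S, n < n' → (0 ≤ φ n → 0 < φ n')

/-- The *strict outer Spence–Mirrlees condition*. -/
def StrictOuterSpenceMirrlees {Y : Type*} [PartialOrder Y] (f : Y → ℝ → ℝ → ℝ) : Prop :=
  ∀ Ya : ℝ → Y, MonotoneOn Ya (Icc (0:ℝ) 1) → ∀ P : ℝ → ℝ,
    ∀ r ∈ Ioo (0:ℝ) 1, ∀ t ∈ Ioo (0:ℝ) 1, r < t →
      StrictSingleCrossingOn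
        (fun n => limsup (mimickGain f Ya P r t n) (nhdsWithin 0 {(0:ℝ)}ᶜ))
        (Icc (-r) (1 - t))

open Topology Interval

section AuxLemmas


lemma limsup_join_max {u : ℝ → ℝ} {l₁ l₂ : Filter ℝ} [l₁.NeBot] [l₂.NeBot] {x y : ℝ}
    (h1 : Tendsto u l₁ (𝓝 x)) (h2 : Tendsto u l₂ (𝓝 y)) :
    limsup u (l₁ ⊔ l₂) = max x y := by
  have hcb : IsCoboundedUnder (· ≤ ·) (l₁ ⊔ l₂) u :=
    ⟨x, fun a ha => le_of_tendsto h1 (ha.filter_mono le_sup_left)⟩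
  have hbd : IsBoundedUnder (· ≤ ·) (l₁ ⊔ l₂) u := by
    refine ⟨max x y + 1, ?_⟩
    rw [eventually_map, eventually_sup]
    constructor
    · exact (h1.eventually (eventually_le_nhds
        (show x < max x y + 1 by linarith [le_max_left x y]))).mono fun z hz => hz
    · exact (h2.eventually (eventually_le_nhds
        (show y < max x y + 1 by linarith [le_max_right x y]))).mono fun z hz => hz
  apply le_antisymm
  · refine le_of_forall_pos_le_add fun ε hε => ?_
    refine Filter.limsup_le_of_le hcb ?_
    rw [eventually_sup]
    constructor
    · exact (h1.eventually (eventually_le_nhds (show x < x + ε by linarith))).mono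
        fun z hz => hz.trans (by gcongr; exact le_max_left x y)
    · exact (h2.eventually (eventually_le_nhds (show y < y + ε by linarith))).mono
        fun z hz => hz.trans (by gcongr; exact le_max_right x y)
  · refine max_le ?_ ?_
    · rw [← h1.limsup_eq]
      exact limsup_le_limsup_of_le le_sup_left
        ⟨x, fun a ha => le_of_tendsto h1 ha⟩ hbd
    · rw [← h2.limsup_eq]
      exact limsup_le_limsup_of_le le_sup_right
        ⟨y, fun a ha => le_of_tendsto h2 ha⟩ hbd

lemma tendsto_avg_right (φ : ℝ → ℝ) (a b : ℝ) (hab : a < b)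
    (hφ : ContinuousOn φ (Icc a b)) :
    Tendsto (fun m => (∫ s in (b - m)..b, φ s) / m) (𝓝[>] (0:ℝ)) (𝓝 (φ b)) := by
  rw [Metric.tendsto_nhdsWithin_nhds]
  intro ε hε
  have hb : b ∈ Icc a b := ⟨hab.le, le_rfl⟩
  have hc := hφ b hb
  rw [Metric.continuousWithinAt_iff] at hc
  obtain ⟨δ, hδ0, hδ⟩ := hc (ε/2) (by linarith)
  refine ⟨min δ (b - a), lt_min hδ0 (by linarith), ?_⟩
  intro m hm hdist
  have hm0 : (0:ℝ) < m := hm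
  rw [Real.dist_eq, sub_zero, abs_of_pos hm0] at hdist
  have h1 : a ≤ b - m := by have := hdist.trans_le (min_le_right _ _); linarith
  have h2 : b - m ≤ b := by linarith
  have hmδ : m < δ := hdist.trans_le (min_le_left _ _)
  have hint : IntervalIntegrable φ volume (b - m) b := by
    apply ContinuousOn.intervalIntegrable
    rw [uIcc_of_le h2]
    exact hφ.mono (Icc_subset_Icc h1 le_rfl)
  have hconst : IntervalIntegrable (fun _ => φ b) volume (b - m) b :=
    intervalIntegrable_const
  have key : (∫ s in (b - m)..b, (φ s - φ b)) = (∫ s in (b - m)..b, φ s) - m * φ b := by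
    rw [intervalIntegral.integral_sub hint hconst, intervalIntegral.integral_const,
      smul_eq_mul]
    ring
  have hbound : |∫ s in (b - m)..b, (φ s - φ b)| ≤ (ε/2) * |b - (b - m)| := by
    have : ∀ x ∈ Ι (b - m) b, ‖φ x - φ b‖ ≤ ε/2 := by
      intro x hx
      rw [uIoc_of_le h2] at hx
      have hxIcc : x ∈ Icc a b := ⟨h1.trans hx.1.le, hx.2⟩
      have hdx : dist x b < δ := by
        rw [Real.dist_eq, abs_of_nonpos (by linarith [hx.2] : x - b ≤ 0)]
        have := hx.1
        linarith
      exact le_of_lt (by simpa [Real.dist_eq] using hδ hxIcc hdx)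
    simpa [Real.norm_eq_abs] using intervalIntegral.norm_integral_le_of_norm_le_const this
  rw [Real.dist_eq]
  have heq : (∫ s in (b - m)..b, φ s) / m - φ b = (∫ s in (b - m)..b, (φ s - φ b)) / m := by
    rw [key]
    field_simp
  rw [heq, abs_div, abs_of_pos hm0]
  have habs : |b - (b - m)| = m := by rw [show b - (b - m) = m by ring, abs_of_pos hm0]
  rw [habs] at hbound
  calc |∫ s in (b - m)..b, (φ s - φ b)| / m ≤ (ε/2 * m) / m := by gcongr
    _ = ε/2 := by rw [mul_div_assoc, div_self hm0.ne', mul_one]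
    _ < ε := by linarith

lemma tendsto_avg_left (φ : ℝ → ℝ) (a b : ℝ) (hab : a < b)
    (hφ : ContinuousOn φ (Icc a b)) :
    Tendsto (fun m => (∫ s in a..(a + m), φ s) / m) (𝓝[>] (0:ℝ)) (𝓝 (φ a)) := by
  rw [Metric.tendsto_nhdsWithin_nhds]
  intro ε hε
  have ha : a ∈ Icc a b := ⟨le_rfl, hab.le⟩
  have hc := hφ a ha
  rw [Metric.continuousWithinAt_iff] at hc
  obtain ⟨δ, hδ0, hδ⟩ := hc (ε/2) (by linarith)
  refine ⟨min δ (b - a), lt_min hδ0 (by linarith), ?_⟩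
  intro m hm hdist
  have hm0 : (0:ℝ) < m := hm
  rw [Real.dist_eq, sub_zero, abs_of_pos hm0] at hdist
  have h1 : a + m ≤ b := by have := hdist.trans_le (min_le_right _ _); linarith
  have h2 : a ≤ a + m := by linarith
  have hmδ : m < δ := hdist.trans_le (min_le_left _ _)
  have hint : IntervalIntegrable φ volume a (a + m) := by
    apply ContinuousOn.intervalIntegrable
    rw [uIcc_of_le h2]
    exact hφ.mono (Icc_subset_Icc le_rfl h1)
  have hconst : IntervalIntegrable (fun _ => φ a) volume a (a + m) :=
    intervalIntegrable_const
  have key : (∫ s in a..(a + m), (φ s - φ a)) = (∫ s in a..(a + m), φ s) - m * φ a := by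
    rw [intervalIntegral.integral_sub hint hconst, intervalIntegral.integral_const,
      smul_eq_mul]
    ring
  have hbound : |∫ s in a..(a + m), (φ s - φ a)| ≤ (ε/2) * |a + m - a| := by
    have : ∀ x ∈ Ι a (a + m), ‖φ x - φ a‖ ≤ ε/2 := by
      intro x hx
      rw [uIoc_of_le h2] at hx
      have hxIcc : x ∈ Icc a b := ⟨hx.1.le, hx.2.trans h1⟩
      have hdx : dist x a < δ := by
        rw [Real.dist_eq, abs_of_pos (by linarith [hx.1] : 0 < x - a)]
        have := hx.2
        linarith
      exact le_of_lt (by simpa [Real.dist_eq] using hδ hxIcc hdx)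
    simpa [Real.norm_eq_abs] using intervalIntegral.norm_integral_le_of_norm_le_const this
  rw [Real.dist_eq]
  have heq : (∫ s in a..(a + m), φ s) / m - φ a = (∫ s in a..(a + m), (φ s - φ a)) / m := by
    rw [key]
    field_simp
  rw [heq, abs_div, abs_of_pos hm0]
  have habs : |a + m - a| = m := by rw [show a + m - a = m by ring, abs_of_pos hm0]
  rw [habs] at hbound
  calc |∫ s in a..(a + m), (φ s - φ a)| / m ≤ (ε/2 * m) / m := by gcongr
    _ = ε/2 := by rw [mul_div_assoc, div_self hm0.ne', mul_one]
    _ < ε := by linarith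

noncomputable def step2 {α : Type*} (r t : ℝ) (a b c : α) : ℝ → α := fun s =>
  if s < r then a else if s < t then b else c

lemma step2_lo {α : Type*} {r t s : ℝ} {a b c : α} (h : s < r) : step2 r t a b c s = a :=
  if_pos h

lemma step2_mid {α : Type*} {r t s : ℝ} {a b c : α} (h1 : r ≤ s) (h2 : s < t) :
    step2 r t a b c s = b := by
  rw [step2, if_neg (not_lt.2 h1), if_pos h2]

lemma step2_hi {α : Type*} {r t s : ℝ} {a b c : α} (h1 : r ≤ s) (h2 : t ≤ s) :
    step2 r t a b c s = c := by
  rw [step2, if_neg (not_lt.2 h1), if_neg (not_lt.2 h2)]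

lemma step2_monotone {α : Type*} [Preorder α] {r t : ℝ} {a b c : α}
    (hab : a ≤ b) (hbc : b ≤ c) : Monotone (step2 r t a b c) := by
  intro s s' hss'
  unfold step2
  split_ifs <;>
    first
      | exact le_rfl
      | exact hab
      | exact hbc
      | exact hab.trans hbc
      | linarith

-- ae helper
lemma ae_ne_point (c : ℝ) : ∀ᵐ s : ℝ, s ≠ c := by
  rw [MeasureTheory.ae_iff]
  have h : {s : ℝ | ¬ s ≠ c} = {c} := by ext z; simp
  rw [h]
  exact measure_singleton c

lemma II_of_ae_eq {φ ψ : ℝ → ℝ} {a b : ℝ} (hφ : IntervalIntegrable φ volume a b)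
    (hae : ∀ᵐ s ∂(volume : Measure ℝ), s ∈ Ι a b → φ s = ψ s) :
    IntervalIntegrable ψ volume a b := by
  rw [intervalIntegrable_iff] at hφ ⊢
  exact hφ.congr_fun_ae ((ae_restrict_iff' measurableSet_uIoc).2 hae)

lemma core {Y : Type*} (f : Y → ℝ → ℝ → ℝ)
    (hcont : ∀ (z : Y) (p : ℝ), ContinuousOn (fun τ => f z p τ) (Icc (0:ℝ) 1))
    (ya yb yc : Y) (pa pb pc r t n : ℝ) (hr : 0 < r) (hrt : r < t) (ht : t < 1)
    (hn : -r ≤ n) (hn' : n ≤ 1 - t) :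
    limsup (mimickGain f (step2 r t ya yb yc) (step2 r t pa pb pc) r t n)
      (nhdsWithin 0 {(0:ℝ)}ᶜ)
    = max (f yb pb (r + n) - f ya pa (r + n)) (f yc pc (t + n) - f yb pb (t + n)) := by
  set A : ℝ → ℝ := fun s => f ya pa (s + n) with hA_def
  set B : ℝ → ℝ := fun s => f yb pb (s + n) with hB_def
  set C : ℝ → ℝ := fun s => f yc pc (s + n) with hC_def
  have hmap : MapsTo (fun s => s + n) (Icc r t) (Icc (0:ℝ) 1) := by
    intro s hs
    simp only [mem_Icc] at hs ⊢
    exact ⟨by linarith [hs.1], by linarith [hs.2]⟩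
  have hA : ContinuousOn A (Icc r t) :=
    (hcont ya pa).comp ((continuous_id.add continuous_const).continuousOn) hmap
  have hB : ContinuousOn B (Icc r t) :=
    (hcont yb pb).comp ((continuous_id.add continuous_const).continuousOn) hmap
  have hC : ContinuousOn C (Icc r t) :=
    (hcont yc pc).comp ((continuous_id.add continuous_const).continuousOn) hmap
  have hint : ∀ (φ : ℝ → ℝ), ContinuousOn φ (Icc r t) → ∀ a b : ℝ,
      r ≤ a → a ≤ b → b ≤ t → IntervalIntegrable φ volume a b := by
    intro φ hφ a b h1 h2 h3
    apply ContinuousOn.intervalIntegrable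
    rw [uIcc_of_le h2]
    exact hφ.mono (Icc_subset_Icc h1 h3)
  -- the positive-side formula
  have hplus : ∀ m ∈ Ioo (0:ℝ) (t - r),
      mimickGain f (step2 r t ya yb yc) (step2 r t pa pb pc) r t n m
        = (∫ s in (t - m)..t, (C s - B s)) / m := by
    intro m hm
    obtain ⟨hm0, hmt⟩ := hm
    have h1 : r ≤ t - m := by linarith
    have h2 : t - m ≤ t := by linarith
    have hBi : IntervalIntegrable B volume r (t - m) := hint B hB r (t - m) le_rfl h1 h2
    have hBi2 : IntervalIntegrable B volume (t - m) t := hint B hB (t - m) t h1 h2 le_rfl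
    have hCi : IntervalIntegrable C volume (t - m) t := hint C hC (t - m) t h1 h2 le_rfl
    -- shifted integrand equals B on (r, t-m) a.e.
    have haeB : ∀ᵐ s ∂(volume : Measure ℝ), s ∈ Ι r (t - m) →
        B s = f (step2 r t ya yb yc (s + m)) (step2 r t pa pb pc (s + m)) (s + n) := by
      filter_upwards [ae_ne_point (t - m)] with s hs hsmem
      rw [uIoc_of_le h1] at hsmem
      have hlt : s < t - m := lt_of_le_of_ne hsmem.2 hs
      have e1 : step2 r t ya yb yc (s + m) = yb :=
        step2_mid (by linarith [hsmem.1]) (by linarith)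
      have e2 : step2 r t pa pb pc (s + m) = pb :=
        step2_mid (by linarith [hsmem.1]) (by linarith)
      rw [e1, e2]
    have haeC : ∀ᵐ s ∂(volume : Measure ℝ), s ∈ Ι (t - m) t →
        C s = f (step2 r t ya yb yc (s + m)) (step2 r t pa pb pc (s + m)) (s + n) := by
      filter_upwards with s hsmem
      rw [uIoc_of_le h2] at hsmem
      have e1 : step2 r t ya yb yc (s + m) = yc :=
        step2_hi (by linarith [hsmem.1]) (by linarith [hsmem.1])
      have e2 : step2 r t pa pb pc (s + m) = pc :=
        step2_hi (by linarith [hsmem.1]) (by linarith [hsmem.1])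
      rw [e1, e2]
    have hae0 : ∀ᵐ s ∂(volume : Measure ℝ), s ∈ Ι r t →
        B s = f (step2 r t ya yb yc s) (step2 r t pa pb pc s) (s + n) := by
      filter_upwards [ae_ne_point t] with s hs hsmem
      rw [uIoc_of_le (by linarith : r ≤ t)] at hsmem
      have hlt : s < t := lt_of_le_of_ne hsmem.2 hs
      have e1 : step2 r t ya yb yc s = yb := step2_mid hsmem.1.le hlt
      have e2 : step2 r t pa pb pc s = pb := step2_mid hsmem.1.le hlt
      rw [e1, e2]
    have iFm1 : IntervalIntegrable
        (fun s => f (step2 r t ya yb yc (s + m)) (step2 r t pa pb pc (s + m)) (s + n))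
        volume r (t - m) := II_of_ae_eq hBi haeB
    have iFm2 : IntervalIntegrable
        (fun s => f (step2 r t ya yb yc (s + m)) (step2 r t pa pb pc (s + m)) (s + n))
        volume (t - m) t := II_of_ae_eq hCi haeC
    have e1 : (∫ s in r..t,
          f (step2 r t ya yb yc (s + m)) (step2 r t pa pb pc (s + m)) (s + n))
        = (∫ s in r..(t - m), B s) + ∫ s in (t - m)..t, C s := by
      rw [← integral_add_adjacent_intervals iFm1 iFm2]
      rw [intervalIntegral.integral_congr_ae haeB, intervalIntegral.integral_congr_ae haeC]
    have e0 : (∫ s in r..t,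
          f (step2 r t ya yb yc s) (step2 r t pa pb pc s) (s + n))
        = (∫ s in r..(t - m), B s) + ∫ s in (t - m)..t, B s := by
      rw [integral_add_adjacent_intervals hBi hBi2]
      rw [intervalIntegral.integral_congr_ae hae0]
    rw [mimickGain, e1, e0]
    rw [intervalIntegral.integral_sub hCi hBi2]
    ring
  -- the negative-side formula
  have hminus : ∀ m ∈ Ioo (-(t - r)) (0:ℝ),
      mimickGain f (step2 r t ya yb yc) (step2 r t pa pb pc) r t n m
        = (∫ s in r..(r + -m), (B s - A s)) / (-m) := by
    intro m hm
    obtain ⟨hm1, hm0⟩ := hm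
    have h1 : r ≤ r + -m := by linarith
    have h2 : r + -m ≤ t := by linarith
    have hAi : IntervalIntegrable A volume r (r + -m) := hint A hA r (r + -m) le_rfl h1 h2
    have hBi : IntervalIntegrable B volume r (r + -m) := hint B hB r (r + -m) le_rfl h1 h2
    have hBi2 : IntervalIntegrable B volume (r + -m) t := hint B hB (r + -m) t h1 h2 le_rfl
    have haeA : ∀ᵐ s ∂(volume : Measure ℝ), s ∈ Ι r (r + -m) →
        A s = f (step2 r t ya yb yc (s + m)) (step2 r t pa pb pc (s + m)) (s + n) := by
      filter_upwards [ae_ne_point (r + -m)] with s hs hsmem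
      rw [uIoc_of_le h1] at hsmem
      have hlt : s < r + -m := lt_of_le_of_ne hsmem.2 hs
      have e1 : step2 r t ya yb yc (s + m) = ya := step2_lo (by linarith)
      have e2 : step2 r t pa pb pc (s + m) = pa := step2_lo (by linarith)
      rw [e1, e2]
    have haeB2 : ∀ᵐ s ∂(volume : Measure ℝ), s ∈ Ι (r + -m) t →
        B s = f (step2 r t ya yb yc (s + m)) (step2 r t pa pb pc (s + m)) (s + n) := by
      filter_upwards with s hsmem
      rw [uIoc_of_le h2] at hsmem
      have e1 : step2 r t ya yb yc (s + m) = yb :=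
        step2_mid (by linarith [hsmem.1]) (by linarith [hsmem.2])
      have e2 : step2 r t pa pb pc (s + m) = pb :=
        step2_mid (by linarith [hsmem.1]) (by linarith [hsmem.2])
      rw [e1, e2]
    have hae0 : ∀ᵐ s ∂(volume : Measure ℝ), s ∈ Ι r t →
        B s = f (step2 r t ya yb yc s) (step2 r t pa pb pc s) (s + n) := by
      filter_upwards [ae_ne_point t] with s hs hsmem
      rw [uIoc_of_le (by linarith : r ≤ t)] at hsmem
      have hlt : s < t := lt_of_le_of_ne hsmem.2 hs
      have e1 : step2 r t ya yb yc s = yb := step2_mid hsmem.1.le hlt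
      have e2 : step2 r t pa pb pc s = pb := step2_mid hsmem.1.le hlt
      rw [e1, e2]
    have iFm1 : IntervalIntegrable
        (fun s => f (step2 r t ya yb yc (s + m)) (step2 r t pa pb pc (s + m)) (s + n))
        volume r (r + -m) := II_of_ae_eq hAi haeA
    have iFm2 : IntervalIntegrable
        (fun s => f (step2 r t ya yb yc (s + m)) (step2 r t pa pb pc (s + m)) (s + n))
        volume (r + -m) t := II_of_ae_eq hBi2 haeB2
    have e1 : (∫ s in r..t,
          f (step2 r t ya yb yc (s + m)) (step2 r t pa pb pc (s + m)) (s + n))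
        = (∫ s in r..(r + -m), A s) + ∫ s in (r + -m)..t, B s := by
      rw [← integral_add_adjacent_intervals iFm1 iFm2]
      rw [intervalIntegral.integral_congr_ae haeA, intervalIntegral.integral_congr_ae haeB2]
    have e0 : (∫ s in r..t,
          f (step2 r t ya yb yc s) (step2 r t pa pb pc s) (s + n))
        = (∫ s in r..(r + -m), B s) + ∫ s in (r + -m)..t, B s := by
      rw [integral_add_adjacent_intervals hBi hBi2]
      rw [intervalIntegral.integral_congr_ae hae0]
    have hmne : m ≠ 0 := ne_of_lt hm0
    rw [mimickGain, e1, e0]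
    rw [intervalIntegral.integral_sub hBi hAi]
    rw [div_eq_div_iff hmne (neg_ne_zero.mpr hmne)]
    ring
  -- limits along the two sides
  have hCB : ContinuousOn (fun s => C s - B s) (Icc r t) := hC.sub hB
  have hBA : ContinuousOn (fun s => B s - A s) (Icc r t) := hB.sub hA
  have hTplus : Tendsto (mimickGain f (step2 r t ya yb yc) (step2 r t pa pb pc) r t n)
      (𝓝[>] (0:ℝ)) (𝓝 (C t - B t)) := by
    have h0 := tendsto_avg_right (fun s => C s - B s) r t hrt hCB
    refine Tendsto.congr' ?_ h0
    filter_upwards [Ioo_mem_nhdsGT_of_mem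
      (show (0:ℝ) ∈ Ico (0:ℝ) (t - r) from ⟨le_rfl, by linarith⟩)] with m hm
    exact (hplus m hm).symm
  have hTminus : Tendsto (mimickGain f (step2 r t ya yb yc) (step2 r t pa pb pc) r t n)
      (𝓝[<] (0:ℝ)) (𝓝 (B r - A r)) := by
    have h0 := tendsto_avg_left (fun s => B s - A s) r t hrt hBA
    have hneg : Tendsto (fun m : ℝ => -m) (𝓝[<] (0:ℝ)) (𝓝[>] (0:ℝ)) := by
      apply tendsto_nhdsWithin_of_tendsto_nhds_of_eventually_within
      · simpa using (continuous_neg.tendsto (0:ℝ)).mono_left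
          (nhdsWithin_le_nhds : 𝓝[<] (0:ℝ) ≤ 𝓝 0)
      · filter_upwards [self_mem_nhdsWithin] with m hm
        simpa using hm
    have h2 := h0.comp hneg
    refine Tendsto.congr' ?_ h2
    filter_upwards [Ioo_mem_nhdsLT_of_mem
      (show (0:ℝ) ∈ Ioc (-(t - r)) 0 from ⟨by linarith, le_rfl⟩)] with m hm
    exact (hminus m hm).symm
  have hsplit : nhdsWithin (0:ℝ) {(0:ℝ)}ᶜ = (𝓝[<] (0:ℝ)) ⊔ (𝓝[>] (0:ℝ)) :=
    (nhdsLT_sup_nhdsGT 0).symm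
  rw [hsplit]
  exact limsup_join_max hTminus hTplus

lemma constr {Y : Type*} [PartialOrder Y] (f : Y → ℝ → ℝ → ℝ)
    (hcont : ∀ (z : Y) (p : ℝ), ContinuousOn (fun τ => f z p τ) (Icc (0:ℝ) 1))
    (hanti : ∀ (z : Y), ∀ τ ∈ Icc (0:ℝ) 1, StrictAnti (fun p => f z p τ))
    (y y' : Y) (hyy' : y ≤ y') (π : Y → ℝ) (t₀ t₁ : ℝ)
    (h0 : 0 ≤ t₀) (h01 : t₀ < t₁) (h1 : t₁ ≤ 1) (hne : ¬(t₀ = 0 ∧ t₁ = 1)) :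
    ∃ Ya P r t n₀ n₁ d₀ d₁, MonotoneOn Ya (Icc (0:ℝ) 1) ∧ r ∈ Ioo (0:ℝ) 1 ∧
      t ∈ Ioo (0:ℝ) 1 ∧ r < t ∧
      n₀ ∈ Icc (-r) (1-t) ∧ n₁ ∈ Icc (-r) (1-t) ∧ n₀ < n₁ ∧ d₀ < 0 ∧ d₁ < 0 ∧
      limsup (mimickGain f Ya P r t n₀) (nhdsWithin 0 {(0:ℝ)}ᶜ)
        = max (f y' (π y') t₀ - f y (π y) t₀) d₀ ∧
      limsup (mimickGain f Ya P r t n₁) (nhdsWithin 0 {(0:ℝ)}ᶜ)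
        = max (f y' (π y') t₁ - f y (π y) t₁) d₁ := by
  have ht₁0 : 0 < t₁ := lt_of_le_of_lt h0 h01
  rcases lt_or_ge t₁ 1 with hlt | hge
  · -- anchor at r
    refine ⟨step2 (t₁/2) (1 - t₁/2) y y' y', step2 (t₁/2) (1 - t₁/2) (π y) (π y') (π y' + 1),
      t₁/2, 1 - t₁/2, t₀ - t₁/2, t₁/2,
      f y' (π y' + 1) (1 - t₁ + t₀) - f y' (π y') (1 - t₁ + t₀),
      f y' (π y' + 1) 1 - f y' (π y') 1,
      (step2_monotone hyy' le_rfl).monotoneOn _,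
      ⟨by linarith, by linarith⟩, ⟨by linarith, by linarith⟩, by linarith,
      ⟨by linarith, by linarith⟩, ⟨by linarith, by linarith⟩, by linarith,
      sub_neg.mpr (hanti y' (1 - t₁ + t₀) ⟨by linarith, by linarith⟩ (lt_add_one (π y'))),
      sub_neg.mpr (hanti y' 1 ⟨by linarith, le_rfl⟩ (lt_add_one (π y'))),
      ?_, ?_⟩
    · have h := core f hcont y y' y' (π y) (π y') (π y' + 1) (t₁/2) (1 - t₁/2) (t₀ - t₁/2)
        (by linarith) (by linarith) (by linarith) (by linarith) (by linarith)
      rw [show t₁/2 + (t₀ - t₁/2) = t₀ by ring,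
        show 1 - t₁/2 + (t₀ - t₁/2) = 1 - t₁ + t₀ by ring] at h
      exact h
    · have h := core f hcont y y' y' (π y) (π y') (π y' + 1) (t₁/2) (1 - t₁/2) (t₁/2)
        (by linarith) (by linarith) (by linarith) (by linarith) (by linarith)
      rw [show t₁/2 + t₁/2 = t₁ by ring,
        show 1 - t₁/2 + t₁/2 = 1 by ring] at h
      exact h
  · -- t₁ = 1, anchor at t
    have ht₁ : t₁ = 1 := le_antisymm h1 hge
    have ht₀0 : 0 < t₀ := by
      rcases lt_or_eq_of_le h0 with h | h
      · exact h
      · exact absurd ⟨h.symm, ht₁⟩ hne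
    have ht₀1 : t₀ < 1 := by linarith
    refine ⟨step2 (1 - t₀) (1 - t₀/2) y y y', step2 (1 - t₀) (1 - t₀/2) (π y - 1) (π y) (π y'),
      1 - t₀, 1 - t₀/2, t₀ + t₀/2 - 1, t₁ + t₀/2 - 1,
      f y (π y) (t₀/2) - f y (π y - 1) (t₀/2),
      f y (π y) (t₁ - t₀/2) - f y (π y - 1) (t₁ - t₀/2),
      (step2_monotone le_rfl hyy').monotoneOn _,
      ⟨by linarith, by linarith⟩, ⟨by linarith, by linarith⟩, by linarith,
      ⟨by linarith, by linarith⟩, ⟨by linarith, by linarith⟩, by linarith,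
      sub_neg.mpr (hanti y (t₀/2) ⟨by linarith, by linarith⟩ (by linarith : π y - 1 < π y)),
      sub_neg.mpr (hanti y (t₁ - t₀/2) ⟨by linarith, by linarith⟩ (by linarith : π y - 1 < π y)),
      ?_, ?_⟩
    · have h := core f hcont y y y' (π y - 1) (π y) (π y') (1 - t₀) (1 - t₀/2) (t₀ + t₀/2 - 1)
        (by linarith) (by linarith) (by linarith) (by linarith) (by linarith)
      rw [show 1 - t₀ + (t₀ + t₀/2 - 1) = t₀/2 by ring,
        show 1 - t₀/2 + (t₀ + t₀/2 - 1) = t₀ by ring, max_comm] at h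
      exact h
    · have h := core f hcont y y y' (π y - 1) (π y) (π y') (1 - t₀) (1 - t₀/2) (t₁ + t₀/2 - 1)
        (by linarith) (by linarith) (by linarith) (by linarith) (by linarith)
      rw [show 1 - t₀ + (t₁ + t₀/2 - 1) = t₁ - t₀/2 by ring,
        show 1 - t₀/2 + (t₁ + t₀/2 - 1) = t₁ by ring, max_comm] at h
      exact h

end AuxLemmas

/-- If the payoff `f` (with `p ↦ f y p t` strictly decreasing and onto `ℝ`) is regular and
satisfies the (strict) outer Spence–Mirrlees condition, then for any price schedule
`π : 𝒴 → ℝ`, the map `(y,t) ↦ f y (π y) t` has (strictly) single-crossing differences: for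
`y < y'`, the map `t ↦ f y' (π y') t − f y (π y) t` is (strictly) single-crossing on `[0,1]`. -/
theorem priceSchedule_singleCrossingDifferences
    {Y : Type*} [PartialOrder Y] (f f₃ : Y → ℝ → ℝ → ℝ)
    (henv : ∀ (y : Y), ∀ t ∈ Icc (0:ℝ) 1,
      StrictAnti (fun p => f y p t) ∧ Function.Surjective (fun p => f y p t))
    (hf : PayoffRegular f f₃)
    (π : Y → ℝ) :
    (OuterSpenceMirrlees f → ∀ y y' : Y, y < y' →
      SingleCrossingOn (fun t => f y' (π y') t - f y (π y) t) (Icc (0:ℝ) 1)) ∧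
    (StrictOuterSpenceMirrlees f → ∀ y y' : Y, y < y' →
      StrictSingleCrossingOn (fun t => f y' (π y') t - f y (π y) t) (Icc (0:ℝ) 1)) := by
  have hcont : ∀ (z : Y) (p : ℝ), ContinuousOn (fun τ => f z p τ) (Icc (0:ℝ) 1) :=
    fun z p τ hτ => (hf.1 z p τ hτ).continuousWithinAt
  have hanti : ∀ (z : Y), ∀ τ ∈ Icc (0:ℝ) 1, StrictAnti (fun p => f z p τ) :=
    fun z τ hτ => (henv z τ hτ).1
  constructor
  · intro hOSM y y' hyy'
    have step : ∀ t₀ t₁ : ℝ, 0 ≤ t₀ → t₀ < t₁ → t₁ ≤ 1 → ¬(t₀ = 0 ∧ t₁ = 1) →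
        (0 ≤ f y' (π y') t₀ - f y (π y) t₀ → 0 ≤ f y' (π y') t₁ - f y (π y) t₁) ∧
        (0 < f y' (π y') t₀ - f y (π y) t₀ → 0 < f y' (π y') t₁ - f y (π y) t₁) := by
      intro t₀ t₁ h0 h01 h1 hne
      obtain ⟨Ya, P, r, t, n₀, n₁, d₀, d₁, hmono, hrI, htI, hrt, hn₀, hn₁, hn01, hd₀, hd₁,
        e₀, e₁⟩ := constr f hcont hanti y y' hyy'.le π t₀ t₁ h0 h01 h1 hne
      have hsc := hOSM Ya hmono P r hrI t htI hrt n₀ hn₀ n₁ hn₁ hn01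
      simp only [] at hsc
      rw [e₀, e₁] at hsc
      constructor
      · intro h
        have h2 := hsc.1 (le_trans h (le_max_left _ _))
        by_contra hneg
        push_neg at hneg
        have : max (f y' (π y') t₁ - f y (π y) t₁) d₁ < 0 := max_lt hneg hd₁
        linarith
      · intro h
        have h2 := hsc.2 (lt_of_lt_of_le h (le_max_left _ _))
        by_contra hneg
        push_neg at hneg
        have : max (f y' (π y') t₁ - f y (π y) t₁) d₁ ≤ 0 := max_le hneg hd₁.le
        linarith
    intro t₀ ht₀ t₁ ht₁ h01
    by_cases hc : t₀ = 0 ∧ t₁ = 1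
    · obtain ⟨h0', h1'⟩ := hc
      subst h0'; subst h1'
      have s1 := step 0 (1/2) le_rfl (by norm_num) (by norm_num) (by norm_num)
      have s2 := step (1/2) 1 (by norm_num) (by norm_num) le_rfl (by norm_num)
      exact ⟨fun h => s2.1 (s1.1 h), fun h => s2.2 (s1.2 h)⟩
    · exact step t₀ t₁ ht₀.1 h01 ht₁.2 hc
  · intro hOSM y y' hyy'
    have step : ∀ t₀ t₁ : ℝ, 0 ≤ t₀ → t₀ < t₁ → t₁ ≤ 1 → ¬(t₀ = 0 ∧ t₁ = 1) →
        (0 ≤ f y' (π y') t₀ - f y (π y) t₀ → 0 < f y' (π y') t₁ - f y (π y) t₁) := by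
      intro t₀ t₁ h0 h01 h1 hne
      obtain ⟨Ya, P, r, t, n₀, n₁, d₀, d₁, hmono, hrI, htI, hrt, hn₀, hn₁, hn01, hd₀, hd₁,
        e₀, e₁⟩ := constr f hcont hanti y y' hyy'.le π t₀ t₁ h0 h01 h1 hne
      have hsc := hOSM Ya hmono P r hrI t htI hrt n₀ hn₀ n₁ hn₁ hn01
      simp only [] at hsc
      rw [e₀, e₁] at hsc
      intro h
      have h2 := hsc (le_trans h (le_max_left _ _))
      by_contra hneg
      push_neg at hneg
      have : max (f y' (π y') t₁ - f y (π y) t₁) d₁ ≤ 0 := max_le hneg hd₁.le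
      linarith
    intro t₀ ht₀ t₁ ht₁ h01
    by_cases hc : t₀ = 0 ∧ t₁ = 1
    · obtain ⟨h0', h1'⟩ := hc
      subst h0'; subst h1'
      have s1 := step 0 (1/2) le_rfl (by norm_num) (by norm_num) (by norm_num)
      have s2 := step (1/2) 1 (by norm_num) (by norm_num) le_rfl (by norm_num)
      exact fun h => s2 (s1 h).le
    · exact step t₀ t₁ ht₀.1 h01 ht₁.2 hc
end

section
/- If there is a strictly increasing function from a partially ordered set 𝒴 to ℝ, then 𝒴 is chain-separable. -/
/-- If there is a strictly increasing function from a partially ordered set `𝒴` to `ℝ`, then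
`𝒴` is chain-separable: for each chain `C ⊆ 𝒴` there is a countable set `B ⊆ 𝒴` that is
order-dense in `C` (for any `c < c'` in `C` there is `b ∈ B` with `c ≤ b ≤ c'`). -/
theorem chainSeparable_of_strictMono_to_real
    {𝒴 : Type*} [PartialOrder 𝒴] (φ : 𝒴 → ℝ) (hφ : StrictMono φ) :
    ∀ C : Set 𝒴, IsChain (· ≤ ·) C → ∃ B : Set 𝒴, B.Countable ∧
      ∀ c ∈ C, ∀ c' ∈ C, c < c' → ∃ b ∈ B, c ≤ b ∧ b ≤ c' := by
  intro C hC
  classical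
  -- On the chain, φ reflects strict order.
  have hlt : ∀ {x y : 𝒴}, x ∈ C → y ∈ C → φ x < φ y → x < y := by
    intro x y hx hy hxy
    rcases eq_or_ne x y with rfl | hne
    · exact absurd hxy (lt_irrefl _)
    rcases hC hx hy hne with h | h
    · exact lt_of_le_of_ne h (fun h' => hne h')
    · exact absurd (hφ.monotone h) (not_le_of_gt hxy)
  -- Picks for rational intervals.
  set P : ℚ × ℚ → Prop := fun pq => ∃ x, x ∈ C ∧ (pq.1 : ℝ) < φ x ∧ φ x < (pq.2 : ℝ) with hP
  let S : Set 𝒴 := ⋃ pq : ℚ × ℚ, if h : P pq then {h.choose} else ∅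
  have hScount : S.Countable := by
    apply Set.countable_iUnion
    intro pq
    by_cases h : P pq
    · simp [h]
    · simp [h]
  -- Jumps.
  set Q : 𝒴 → Prop := fun x => ∃ y, y ∈ C ∧ x < y ∧ ∀ z ∈ C, ¬(x < z ∧ z < y) with hQ
  set J : Set 𝒴 := {x | x ∈ C ∧ Q x} with hJ
  -- a rational strictly between φ x and φ (partner x)
  let g : 𝒴 → ℚ := fun x =>
    if h : Q x then (exists_rat_btwn (hφ h.choose_spec.2.1)).choose else 0
  have hg : ∀ x, (h : Q x) → (φ x < (g x : ℝ) ∧ ((g x : ℝ)) < φ h.choose) := by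
    intro x h
    simp only [g, dif_pos h]
    exact (exists_rat_btwn (hφ h.choose_spec.2.1)).choose_spec
  have hginj : Set.InjOn g J := by
    intro x1 hx1 x2 hx2 heq
    by_contra hne
    -- wlog x1 < x2
    have key : ∀ a b : 𝒴, a ∈ J → b ∈ J → a < b → g a ≠ g b := by
      intro a b ha hb hab
      obtain ⟨haC, hQa⟩ := ha
      obtain ⟨hbC, hQb⟩ := hb
      have h1 := hg a hQa
      have h2 := hg b hQb
      -- partner of a is ≤ b
      have hya : hQa.choose ≤ b := by
        rcases eq_or_ne hQa.choose b with h | h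
        · exact le_of_eq h
        rcases hC hQa.choose_spec.1 hbC h with h' | h'
        · exact h'
        · exfalso
          have hb_lt : b < hQa.choose := lt_of_le_of_ne h' (Ne.symm h)
          exact hQa.choose_spec.2.2 b hbC ⟨hab, hb_lt⟩
      have : (g a : ℝ) < (g b : ℝ) := by
        calc (g a : ℝ) < φ hQa.choose := h1.2
          _ ≤ φ b := hφ.monotone hya
          _ < (g b : ℝ) := h2.1
      exact fun he => absurd (congrArg (fun q : ℚ => (q : ℝ)) he) (ne_of_lt this)
    rcases hC hx1.1 hx2.1 hne with h | h
    · exact key x1 x2 hx1 hx2 (lt_of_le_of_ne h hne) heq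
    · exact key x2 x1 hx2 hx1 (lt_of_le_of_ne h (Ne.symm hne)) heq.symm
  have hJcount : J.Countable := by
    rw [← Set.countable_coe_iff]
    exact Countable.of_equiv _ (Equiv.ofInjective (fun x : J => g x)
      (fun a b hab => Subtype.ext (hginj a.2 b.2 hab))).symm
  refine ⟨S ∪ J, hScount.union hJcount, ?_⟩
  intro c hc c' hc' hcc'
  by_cases h : ∃ z ∈ C, c < z ∧ z < c'
  · obtain ⟨z, hzC, hcz, hzc'⟩ := h
    obtain ⟨p, hp1, hp2⟩ := exists_rat_btwn (hφ hcz)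
    obtain ⟨q, hq1, hq2⟩ := exists_rat_btwn (hφ hzc')
    have hPpq : P (p, q) := ⟨z, hzC, hp2, hq1⟩
    refine ⟨hPpq.choose, Or.inl ?_, ?_, ?_⟩
    · refine Set.mem_iUnion.2 ⟨(p, q), ?_⟩
      rw [dif_pos hPpq]; exact rfl
    · obtain ⟨hbC, hb1, hb2⟩ := hPpq.choose_spec
      exact le_of_lt (hlt hc hbC (lt_trans hp1 hb1))
    · obtain ⟨hbC, hb1, hb2⟩ := hPpq.choose_spec
      exact le_of_lt (hlt hbC hc' (lt_trans hb2 hq2))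
  · push_neg at h
    have hQc : Q c := ⟨c', hc', hcc', fun z hz hz2 => h z hz hz2.1 hz2.2⟩
    exact ⟨c, Or.inr ⟨hc, hQc⟩, le_refl c, le_of_lt hcc'⟩
end

section
/- Regularity of L¹ under the a.e. order: Let (Ω,ℱ,μ) be a measure space and let 𝒴 be the space of equivalence classes (modulo μ-a.e. equality) of μ-integrable functions Ω → ℝ, partially ordered by y ≤ y' iff y ≤ y' holds μ-almost everywhere. Then 𝒴 is order-dense-in-itself, countably chain-complete, and chain-separable. -/
open MeasureTheory Set Filter Topology

section Aux

variable {Ω : Type*} [MeasurableSpace Ω] {μ : Measure Ω}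

private lemma L1_int_mono {f g : Lp ℝ 1 μ} (h : f ≤ g) :
    ∫ ω, f ω ∂μ ≤ ∫ ω, g ω ∂μ :=
  integral_mono_ae (L1.integrable_coeFn f) (L1.integrable_coeFn g) ((Lp.coeFn_le f g).mpr h)

private lemma L1_int_strictMono {f g : Lp ℝ 1 μ} (h : f < g) :
    ∫ ω, f ω ∂μ < ∫ ω, g ω ∂μ := by
  refine lt_of_le_of_ne (L1_int_mono h.le) fun heq => h.ne ?_
  have hsub : ⇑(g - f) =ᵐ[μ] ⇑g - ⇑f := Lp.coeFn_sub g f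
  have hnn : 0 ≤ᵐ[μ] ⇑(g - f) := (Lp.coeFn_nonneg _).mpr (sub_nonneg.mpr h.le)
  have hint : ∫ ω, (g - f) ω ∂μ = 0 := by
    rw [integral_congr_ae hsub]
    have : ∫ ω, (⇑g - ⇑f) ω ∂μ = ∫ ω, g ω ∂μ - ∫ ω, f ω ∂μ := by
      simp only [Pi.sub_apply]
      exact integral_sub (L1.integrable_coeFn g) (L1.integrable_coeFn f)
    rw [this, heq, sub_self]
  have h0 : ⇑(g - f) =ᵐ[μ] 0 :=
    (integral_eq_zero_iff_of_nonneg_ae hnn (L1.integrable_coeFn _)).mp hint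
  have : g - f = 0 := Lp.ext (h0.trans (Lp.coeFn_zero ℝ 1 μ).symm)
  exact (sub_eq_zero.mp this).symm

/-- A countable nonempty chain bounded above in `L¹` has a supremum. -/
private lemma L1_exists_isLUB (C : Set (Lp ℝ 1 μ)) (hcnt : C.Countable)
    (hne : C.Nonempty) (hbdd : BddAbove C) : ∃ s, IsLUB C s := by
  obtain ⟨u, hu⟩ := hbdd
  obtain ⟨e, rfl⟩ := hcnt.exists_eq_range hne
  set d : ℕ → Lp ℝ 1 μ := fun n =>
    (Finset.range (n + 1)).sup' (Finset.nonempty_range_iff.mpr (Nat.succ_ne_zero n)) e with hd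
  have he_le_d : ∀ i n, i ≤ n → e i ≤ d n := fun i n hin =>
    Finset.le_sup' e (Finset.mem_range.mpr (Nat.lt_succ_of_le hin))
  have hd_mono : Monotone d := fun n m hnm =>
    Finset.sup'_le _ e fun i hi =>
      he_le_d i m (Nat.le_of_lt_succ (Nat.lt_of_lt_of_le (Finset.mem_range.mp hi) (by omega)))
  have hd_le_u : ∀ n, d n ≤ u := fun n =>
    Finset.sup'_le _ e fun i _ => hu (mem_range_self i)
  set r : ℕ → ℝ := fun n => ∫ ω, (d n) ω ∂μ with hr
  have hr_mono : Monotone r := fun n m hnm => L1_int_mono (hd_mono hnm)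
  have hr_bdd : BddAbove (range r) :=
    ⟨∫ ω, u ω ∂μ, by rintro _ ⟨n, rfl⟩; exact L1_int_mono (hd_le_u n)⟩
  have hr_cauchy : CauchySeq r :=
    (tendsto_atTop_ciSup hr_mono hr_bdd).cauchySeq
  have key : ∀ n m, n ≤ m → dist (d n) (d m) = dist (r n) (r m) := by
    intro n m hnm
    have hle : d n ≤ d m := hd_mono hnm
    have hae : ⇑(d m - d n) =ᵐ[μ] ⇑(d m) - ⇑(d n) := Lp.coeFn_sub _ _
    have haele : ⇑(d n) ≤ᵐ[μ] ⇑(d m) := (Lp.coeFn_le _ _).mpr hle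
    have h1 : dist (d n) (d m) = ‖d m - d n‖ := by rw [dist_eq_norm, norm_sub_rev]
    have h2 : ‖d m - d n‖ = ∫ ω, ‖(d m - d n) ω‖ ∂μ := L1.norm_eq_integral_norm _
    have h3 : ∫ ω, ‖(d m - d n) ω‖ ∂μ = ∫ ω, ((d m) ω - (d n) ω) ∂μ := by
      refine integral_congr_ae ?_
      filter_upwards [hae, haele] with ω h1' h2'
      rw [h1', Pi.sub_apply, Real.norm_of_nonneg (sub_nonneg.mpr h2')]
    have h4 : ∫ ω, ((d m) ω - (d n) ω) ∂μ = r m - r n :=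
      integral_sub (L1.integrable_coeFn _) (L1.integrable_coeFn _)
    rw [h1, h2, h3, h4, Real.dist_eq, abs_of_nonpos (by linarith [hr_mono hnm])]
    ring
  have hd_cauchy : CauchySeq d := by
    rw [Metric.cauchySeq_iff] at hr_cauchy ⊢
    intro ε hε
    obtain ⟨N, hN⟩ := hr_cauchy ε hε
    refine ⟨N, fun m hm n hn => ?_⟩
    rcases le_total m n with h | h
    · rw [key m n h]; exact hN m hm n hn
    · rw [dist_comm, key n m h, dist_comm]; exact hN m hm n hn
  obtain ⟨s, hs⟩ := cauchySeq_tendsto_of_complete hd_cauchy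
  refine ⟨s, ?_, ?_⟩
  · rintro _ ⟨i, rfl⟩
    exact ge_of_tendsto hs (eventually_atTop.mpr ⟨i, fun n hn => he_le_d i n hn⟩)
  · intro v hv
    have : ∀ n, d n ≤ v := fun n => Finset.sup'_le _ e fun i _ => hv (mem_range_self i)
    exact le_of_tendsto hs (Eventually.of_forall this)

end Aux

/-- **Regularity of `L¹` under the a.e. order.** Let `(Ω,ℱ,μ)` be a measure space and `𝒴` the
space of equivalence classes (modulo `μ`-a.e. equality) of `μ`-integrable functions `Ω → ℝ`,
partially ordered by `y ≤ y'` iff `y ≤ y'` `μ`-a.e. (this is the order on `Lp ℝ 1 μ` in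
Mathlib). Then `𝒴` is order-dense-in-itself, countably chain-complete, and chain-separable. -/
theorem L1_ae_order_regular
    {Ω : Type*} [MeasurableSpace Ω] (μ : Measure Ω) :
    (∀ a a' : Lp ℝ 1 μ, a < a' → ∃ b : Lp ℝ 1 μ, a < b ∧ b < a') ∧
    (∀ C : Set (Lp ℝ 1 μ), IsChain (· ≤ ·) C → C.Countable → C.Nonempty →
      (BddBelow C → ∃ i : Lp ℝ 1 μ, IsGLB C i) ∧
      (BddAbove C → ∃ s : Lp ℝ 1 μ, IsLUB C s)) ∧
    (∀ C : Set (Lp ℝ 1 μ), IsChain (· ≤ ·) C → ∃ B : Set (Lp ℝ 1 μ), B.Countable ∧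
      ∀ c ∈ C, ∀ c' ∈ C, c < c' → ∃ b ∈ B, c ≤ b ∧ b ≤ c') := by
  classical
  refine ⟨?_, ?_, ?_⟩
  · -- order-dense-in-itself
    intro a a' h
    set x : Lp ℝ 1 μ := a' - a with hxdef
    have hx : 0 < x := sub_pos.mpr h
    have hhalf_le : 0 ≤ (2⁻¹ : ℝ) • x := by
      rw [← Lp.coeFn_nonneg]
      filter_upwards [Lp.coeFn_smul (2⁻¹ : ℝ) x, (Lp.coeFn_nonneg x).mpr hx.le] with ω h1 h2
      simp only [Pi.zero_apply] at h2 ⊢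
      rw [h1, Pi.smul_apply, smul_eq_mul]
      positivity
    have hhalf : 0 < (2⁻¹ : ℝ) • x := by
      refine lt_of_le_of_ne hhalf_le fun h0 => hx.ne' ?_
      have hx2 : x = (2 : ℝ) • ((2⁻¹ : ℝ) • x) := by
        rw [smul_smul]; norm_num
      rw [hx2, ← h0, smul_zero]
    refine ⟨a + (2⁻¹ : ℝ) • x, lt_add_of_pos_right a hhalf, ?_⟩
    have heq : a' - (a + (2⁻¹ : ℝ) • x) = (2⁻¹ : ℝ) • x := by
      rw [hxdef]; module
    have := sub_pos.mp (heq ▸ hhalf)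
    exact this
  · -- countable chain completeness
    intro C hC hcnt hne
    constructor
    · -- infimum via negation
      intro hbdd
      obtain ⟨l, hl⟩ := hbdd
      have hDchain : IsChain (· ≤ ·) ((fun x => -x) '' C) := by
        rintro _ ⟨a, ha, rfl⟩ _ ⟨b, hb, rfl⟩ hne'
        have hab : a ≠ b := fun h => hne' (by rw [h])
        rcases hC ha hb hab with h | h
        · exact Or.inr (neg_le_neg h)
        · exact Or.inl (neg_le_neg h)
      have hDbdd : BddAbove ((fun x => -x) '' C) :=
        ⟨-l, by rintro _ ⟨c, hc, rfl⟩; exact neg_le_neg (hl hc)⟩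
      obtain ⟨s, hs⟩ := L1_exists_isLUB _ (hcnt.image _) (hne.image _) hDbdd
      refine ⟨-s, ?_, ?_⟩
      · intro c hc
        exact neg_le.mp (hs.1 ⟨c, hc, rfl⟩)
      · intro v hv
        refine le_neg.mp (hs.2 ?_)
        rintro _ ⟨c, hc, rfl⟩
        exact neg_le_neg (hv hc)
    · exact L1_exists_isLUB C hcnt hne
  · -- chain-separability
    intro C hC
    set φ : Lp ℝ 1 μ → ℝ := fun f => ∫ ω, f ω ∂μ with hφ
    have hlt : ∀ {a b : Lp ℝ 1 μ}, a ∈ C → b ∈ C → φ a < φ b → a < b := by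
      intro a b ha hb h
      rcases eq_or_ne a b with rfl | hne
      · exact absurd h (lt_irrefl _)
      rcases hC ha hb hne with h' | h'
      · exact lt_of_le_of_ne h' hne
      · exact absurd (L1_int_mono h') (not_le.mpr h)
    set P : ℚ → ℚ → Prop := fun q q' => ∃ c, c ∈ C ∧ (q : ℝ) < φ c ∧ φ c < (q' : ℝ) with hP
    set B₁ : Set (Lp ℝ 1 μ) :=
      ⋃ (q : ℚ) (q' : ℚ), if h : P q q' then {h.choose} else ∅ with hB₁
    have hB₁cnt : B₁.Countable := by
      refine countable_iUnion fun q => countable_iUnion fun q' => ?_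
      split
      · exact countable_singleton _
      · exact countable_empty
    set G : Set (Lp ℝ 1 μ × Lp ℝ 1 μ) :=
      {p | p.1 ∈ C ∧ p.2 ∈ C ∧ p.1 < p.2 ∧ ∀ c ∈ C, ¬(p.1 < c ∧ c < p.2)} with hG
    have hGcnt : G.Countable := by
      have hex : ∀ p : ↥G, ∃ q : ℚ, φ (p : Lp ℝ 1 μ × Lp ℝ 1 μ).1 < (q : ℝ) ∧
          (q : ℝ) < φ (p : Lp ℝ 1 μ × Lp ℝ 1 μ).2 :=
        fun p => exists_rat_btwn (L1_int_strictMono p.2.2.2.1)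
      choose f hf1 hf2 using hex
      have hinj : Function.Injective f := by
        intro p p' hpp'
        have h1 : φ (p : Lp ℝ 1 μ × Lp ℝ 1 μ).1 < (f p : ℝ) := hf1 p
        have h2 : (f p : ℝ) < φ (p : Lp ℝ 1 μ × Lp ℝ 1 μ).2 := hf2 p
        have h1' : φ (p' : Lp ℝ 1 μ × Lp ℝ 1 μ).1 < (f p : ℝ) := hpp' ▸ hf1 p'
        have h2' : (f p : ℝ) < φ (p' : Lp ℝ 1 μ × Lp ℝ 1 μ).2 := hpp' ▸ hf2 p'
        obtain ⟨hp1, hp2, hplt, hpgap⟩ := p.2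
        obtain ⟨hp1', hp2', hplt', hpgap'⟩ := p'.2
        have hfst : (p : Lp ℝ 1 μ × Lp ℝ 1 μ).1 = (p' : Lp ℝ 1 μ × Lp ℝ 1 μ).1 := by
          by_contra hne
          rcases hC hp1 hp1' hne with h | h
          · exact hpgap _ hp1' ⟨lt_of_le_of_ne h hne,
              hlt hp1' hp2 (h1'.trans h2)⟩
          · exact hpgap' _ hp1 ⟨lt_of_le_of_ne h (Ne.symm hne),
              hlt hp1 hp2' (h1.trans h2')⟩
        have hsnd : (p : Lp ℝ 1 μ × Lp ℝ 1 μ).2 = (p' : Lp ℝ 1 μ × Lp ℝ 1 μ).2 := by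
          by_contra hne
          rcases hC hp2 hp2' hne with h | h
          · exact hpgap' _ hp2 ⟨hfst ▸ hplt, lt_of_le_of_ne h hne⟩
          · exact hpgap _ hp2' ⟨hfst.symm ▸ hplt', lt_of_le_of_ne h (Ne.symm hne)⟩
        exact Subtype.ext (Prod.ext hfst hsnd)
      have : Countable ↥G := hinj.countable
      exact countable_coe_iff.mp this
    set B₂ : Set (Lp ℝ 1 μ) := (fun p : Lp ℝ 1 μ × Lp ℝ 1 μ => p.1) '' G with hB₂
    refine ⟨B₁ ∪ B₂, hB₁cnt.union (hGcnt.image _), ?_⟩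
    intro c hc c' hc' hcc'
    by_cases hmid : ∃ c'' ∈ C, c < c'' ∧ c'' < c'
    · obtain ⟨c'', hc''C, hlt1, hlt2⟩ := hmid
      obtain ⟨q, hq1, hq2⟩ := exists_rat_btwn (L1_int_strictMono hlt1)
      obtain ⟨q', hq1', hq2'⟩ := exists_rat_btwn (L1_int_strictMono hlt2)
      have hPqq' : P q q' := ⟨c'', hc''C, hq2, hq1'⟩
      refine ⟨hPqq'.choose, Or.inl ?_, ?_, ?_⟩
      · refine mem_iUnion.mpr ⟨q, mem_iUnion.mpr ⟨q', ?_⟩⟩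
        rw [dif_pos hPqq']
        exact rfl
      · exact (hlt hc hPqq'.choose_spec.1 (hq1.trans hPqq'.choose_spec.2.1)).le
      · exact (hlt hPqq'.choose_spec.1 hc' (hPqq'.choose_spec.2.2.trans hq2')).le
    · refine ⟨c, Or.inr ⟨(c, c'), ?_, rfl⟩, le_refl c, hcc'.le⟩
      exact ⟨hc, hc', hcc', fun x hx hx2 => hmid ⟨x, hx, hx2⟩⟩
end

section
/- Density of differences of convex functions: Let Ω be a nonempty finite set. For any continuous function c : Δ(Ω) → ℝ and any ε > 0, there exist continuous convex functions w⁺, w⁻ : Δ(Ω) → ℝ such that, with w := w⁺ − w⁻, sup_{μ ∈ Δ(Ω)} |c(μ) − w(μ)| < ε. -/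
open Set

section DCaux

variable {E : Type*} [AddCommGroup E] [Module ℝ E] [TopologicalSpace E] {s : Set E}

/-- `f` is a difference of continuous convex functions on `s`. -/
def IsDC (s : Set E) (f : E → ℝ) : Prop :=
  ∃ wp wm : E → ℝ,
    ContinuousOn wp s ∧ ConvexOn ℝ s wp ∧
    ContinuousOn wm s ∧ ConvexOn ℝ s wm ∧
    ∀ x ∈ s, f x = wp x - wm x

lemma IsDC.const (hs : Convex ℝ s) (r : ℝ) : IsDC s (fun _ => r) :=
  ⟨fun _ => r, 0, continuousOn_const, convexOn_const r hs, continuousOn_const,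
    convexOn_const 0 hs, fun x _ => by simp⟩

lemma IsDC.add {f g : E → ℝ} (hf : IsDC s f) (hg : IsDC s g) : IsDC s (f + g) := by
  obtain ⟨p, m, pc, pv, mc, mv, he⟩ := hf
  obtain ⟨p', m', pc', pv', mc', mv', he'⟩ := hg
  exact ⟨p + p', m + m', pc.add pc', pv.add pv', mc.add mc', mv.add mv',
    fun x hx => by simp [he x hx, he' x hx]; ring⟩

lemma IsDC.neg {f : E → ℝ} (hf : IsDC s f) : IsDC s (-f) := by
  obtain ⟨p, m, pc, pv, mc, mv, he⟩ := hf
  exact ⟨m, p, mc, mv, pc, pv, fun x hx => by simp [he x hx]⟩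

lemma IsDC.smul_nonneg {f : E → ℝ} (hf : IsDC s f) {r : ℝ} (hr : 0 ≤ r) :
    IsDC s (fun x => r * f x) := by
  obtain ⟨p, m, pc, pv, mc, mv, he⟩ := hf
  refine ⟨fun x => r * p x, fun x => r * m x, continuousOn_const.mul pc, ?_,
    continuousOn_const.mul mc, ?_, fun x hx => by show r * f x = r * p x - r * m x; rw [he x hx]; ring⟩
  · simpa [smul_eq_mul] using pv.smul hr
  · simpa [smul_eq_mul] using mv.smul hr

lemma IsDC.smul {f : E → ℝ} (hf : IsDC s f) (r : ℝ) : IsDC s (fun x => r * f x) := by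
  rcases le_total 0 r with h | h
  · exact hf.smul_nonneg h
  · have := (hf.neg.smul_nonneg (neg_nonneg.2 h))
    convert this using 2 with x
    simp only [Pi.neg_apply]; ring

/-- Square of a nonneg convex function is convex. -/
lemma sq_convexOn {p : E → ℝ} (hp : ConvexOn ℝ s p) (h0 : ∀ x ∈ s, 0 ≤ p x) :
    ConvexOn ℝ s (fun x => p x * p x) := by
  refine ⟨hp.1, fun x hx y hy a b ha hb hab => ?_⟩
  have hmem : a • x + b • y ∈ s := hp.1 hx hy ha hb hab
  have h1 := hp.2 hx hy ha hb hab
  have h2 := h0 _ hmem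
  have hpx := h0 x hx
  have hpy := h0 y hy
  simp only [smul_eq_mul] at h1 ⊢
  nlinarith [mul_self_le_mul_self h2 h1, mul_nonneg (mul_nonneg ha hb)
    (mul_self_nonneg (p x - p y))]

lemma IsDC.sq (hcs : IsCompact s) {f : E → ℝ} (hf : IsDC s f) :
    IsDC s (fun x => f x * f x) := by
  obtain ⟨p, m, pc, pv, mc, mv, he⟩ := hf
  rcases s.eq_empty_or_nonempty with rfl | hne
  · exact ⟨0, 0, continuousOn_const, convexOn_const 0 pv.1, continuousOn_const,
      convexOn_const 0 pv.1, fun x hx => absurd hx (notMem_empty x)⟩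
  obtain ⟨a, _, hap'⟩ := hcs.exists_isMinOn hne pc
  obtain ⟨b, _, hbm'⟩ := hcs.exists_isMinOn hne mc
  have hap : ∀ x ∈ s, p a ≤ p x := fun x hx => hap' hx
  have hbm : ∀ x ∈ s, m b ≤ m x := fun x hx => hbm' hx
  set M : ℝ := max (-(p a)) (-(m b)) with hM
  set p' : E → ℝ := fun x => p x + M with hp'
  set m' : E → ℝ := fun x => m x + M with hm'
  have hp0 : ∀ x ∈ s, 0 ≤ p' x := fun x hx => by
    have := hap x hx
    have : -(p a) ≤ M := le_max_left _ _
    simp only [hp']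
    nlinarith [hap x hx]
  have hm0 : ∀ x ∈ s, 0 ≤ m' x := fun x hx => by
    have : -(m b) ≤ M := le_max_right _ _
    simp only [hm']
    nlinarith [hbm x hx]
  have hp'c : ContinuousOn p' s := pc.add continuousOn_const
  have hm'c : ContinuousOn m' s := mc.add continuousOn_const
  have hp'v : ConvexOn ℝ s p' := pv.add_const M
  have hm'v : ConvexOn ℝ s m' := mv.add_const M
  refine ⟨fun x => 2 * (p' x * p' x) + 2 * (m' x * m' x), fun x => (p' x + m' x) * (p' x + m' x),
    ?_, ?_, ?_, ?_, ?_⟩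
  · exact ((continuousOn_const.mul (hp'c.mul hp'c)).add
      (continuousOn_const.mul (hm'c.mul hm'c)))
  · have h1 := (sq_convexOn hp'v hp0).smul (by norm_num : (0:ℝ) ≤ 2)
    have h2 := (sq_convexOn hm'v hm0).smul (by norm_num : (0:ℝ) ≤ 2)
    simpa [smul_eq_mul, Pi.add_def] using h1.add h2
  · exact (hp'c.add hm'c).mul (hp'c.add hm'c)
  · exact sq_convexOn (hp'v.add hm'v) (fun x hx => add_nonneg (hp0 x hx) (hm0 x hx))
  · intro x hx
    have := he x hx
    simp only [hp', hm', this]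
    ring

lemma IsDC.mul (hcs : IsCompact s) {f g : E → ℝ} (hf : IsDC s f) (hg : IsDC s g) :
    IsDC s (f * g) := by
  have h1 : IsDC s (fun x => (f + g) x * (f + g) x) := (hf.add hg).sq hcs
  have h2 : IsDC s (fun x => f x * f x) := hf.sq hcs
  have h3 : IsDC s (fun x => g x * g x) := hg.sq hcs
  have h4 := ((h1.add h2.neg).add h3.neg).smul (1/2 : ℝ)
  convert h4 using 2 with x
  simp [Pi.add_apply]
  ring

end DCaux

/-- **Density of differences of convex functions.** Let `Ω` be a nonempty finite set. For any
continuous `c : Δ(Ω) → ℝ` and any `ε > 0`, there are continuous convex functions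
`w⁺, w⁻ : Δ(Ω) → ℝ` such that `w := w⁺ − w⁻` satisfies `sup_{μ ∈ Δ(Ω)} |c μ − w μ| < ε`. -/
theorem diff_of_convex_dense
    {Ω : Type*} [Fintype Ω] [Nonempty Ω]
    (c : (Ω → ℝ) → ℝ) (hc : ContinuousOn c (stdSimplex ℝ Ω))
    (ε : ℝ) (hε : 0 < ε) :
    ∃ wp wm : (Ω → ℝ) → ℝ,
      ContinuousOn wp (stdSimplex ℝ Ω) ∧ ConvexOn ℝ (stdSimplex ℝ Ω) wp ∧
      ContinuousOn wm (stdSimplex ℝ Ω) ∧ ConvexOn ℝ (stdSimplex ℝ Ω) wm ∧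
      ∀ μ ∈ stdSimplex ℝ Ω, |c μ - (wp μ - wm μ)| < ε := by
  set s : Set (Ω → ℝ) := stdSimplex ℝ Ω with hs
  have hconv : Convex ℝ s := convex_stdSimplex ℝ Ω
  have hcomp : IsCompact s := isCompact_stdSimplex ℝ Ω
  haveI : CompactSpace ↥s := isCompact_iff_compactSpace.mp hcomp
  -- the subalgebra of restrictions of DC functions
  let A : Subalgebra ℝ C(↥s, ℝ) :=
  { carrier := {f | ∃ F : (Ω → ℝ) → ℝ, IsDC s F ∧ ∀ x : ↥s, f x = F x}
    mul_mem' := by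
      rintro f g ⟨F, hF, hFe⟩ ⟨G, hG, hGe⟩
      exact ⟨F * G, hF.mul hcomp hG, fun x => by simp [hFe x, hGe x]⟩
    add_mem' := by
      rintro f g ⟨F, hF, hFe⟩ ⟨G, hG, hGe⟩
      exact ⟨F + G, hF.add hG, fun x => by simp [hFe x, hGe x]⟩
    algebraMap_mem' := fun r =>
      ⟨fun _ => r, IsDC.const hconv r, fun x => rfl⟩ }
  have hsep : A.SeparatesPoints := by
    intro x y hxy
    have : (x : Ω → ℝ) ≠ (y : Ω → ℝ) := fun h => hxy (Subtype.ext h)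
    obtain ⟨i, hi⟩ := Function.ne_iff.mp this
    refine ⟨_, ⟨⟨fun μ : ↥s => (μ : Ω → ℝ) i, (continuous_apply i).comp continuous_subtype_val⟩, ?_, rfl⟩, hi⟩
    refine ⟨fun μ => μ i, ?_, fun x => rfl⟩
    refine ⟨fun μ => μ i, 0, (continuous_apply i).continuousOn, ?_,
      continuousOn_const, convexOn_const 0 hconv, fun x _ => by simp⟩
    exact (LinearMap.proj i : (Ω → ℝ) →ₗ[ℝ] ℝ).convexOn hconv
  obtain ⟨⟨g, ⟨F, hF, hFe⟩⟩, hg⟩ :=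
    ContinuousMap.exists_mem_subalgebra_near_continuous_of_separatesPoints A hsep
      (fun x : ↥s => c x) (hc.restrict) ε hε
  obtain ⟨wp, wm, h1, h2, h3, h4, h5⟩ := hF
  refine ⟨wp, wm, h1, h2, h3, h4, fun μ hμ => ?_⟩
  have := hg ⟨μ, hμ⟩
  rw [hFe ⟨μ, hμ⟩] at this
  rw [← h5 μ hμ]
  rw [Real.norm_eq_abs] at this
  rw [abs_sub_comm] at this
  exact this
end
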